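/- arXiv:2604.08416 — 4 statements merged into one kernel-verified Lean document; each statement's English description precedes it below -/
import Mathlib

section
/- Let $Q \subseteq \mathbb{R}^d$ be a cube, $1 \le u \le p \le q < \infty$, and let $w$ be a Muckenhoupt $A_u$ weight on $\mathbb{R}^d$. Set $\alpha = (u-1)(\frac1p - \frac1q)$. Then $[w^{1/q}, w^{1/p}]_{A^{\alpha}_{p,q}(Q)} \le [w]_{A_p}^{1/p}\,[w]_{A_u}^{\frac1p - \frac1q}\,\big(\frac{|Q|^u}{w(Q)}\big)^{\frac1p - \frac1q}$; in particular $(w^{1/q}, w^{1/p}) \in A^{\alpha}_{p,q}(Q)$. -/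
open MeasureTheory
open scoped ENNReal NNReal

noncomputable section

abbrev Euc (d : ℕ) := EuclideanSpace ℝ (Fin d)

structure Cube (d : ℕ) where
  center : Euc d
  side : ℝ
  side_pos : 0 < side

namespace Cube

variable {d : ℕ}

/-- A (half-open) axis-parallel cube in `ℝ^d`. -/
def toSet (Q : Cube d) : Set (Euc d) :=
  {x | ∀ i, Q.center i - Q.side / 2 ≤ x i ∧ x i < Q.center i + Q.side / 2}

/-- The volume `|Q| = ℓ(Q)^d` of a cube. -/
def vol (Q : Cube d) : ℝ := Q.side ^ d

/-- The average `⟨f⟩_Q = |Q|⁻¹ ∫_Q f`. -/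
def avg (Q : Cube d) (f : Euc d → ℝ) : ℝ := Q.vol⁻¹ * ∫ x in Q.toSet, f x

/-- The `ℝ≥0∞`-valued average of a nonnegative function. -/
def elavg (Q : Cube d) (g : Euc d → ℝ≥0∞) : ℝ≥0∞ :=
  (∫⁻ x in Q.toSet, g x) / ENNReal.ofReal Q.vol

/-- The `L^t`-average `⟨f⟩_{t,Q} = (|Q|⁻¹ ∫_Q |f|^t)^{1/t}`, with the
essential supremum when `t = ∞`. -/
def lavg (Q : Cube d) (t : ℝ≥0∞) (f : Euc d → ℝ) : ℝ≥0∞ :=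
  if t = ⊤ then essSup (fun x => ENNReal.ofReal |f x|) (volume.restrict Q.toSet)
  else ((∫⁻ x in Q.toSet, ENNReal.ofReal |f x| ^ t.toReal) / ENNReal.ofReal Q.vol) ^ (1 / t.toReal)

/-- The concentric dilation `γ Q` of a cube (only intended for `γ ≥ 1`). -/
def scale (γ : ℝ) (Q : Cube d) : Cube d :=
  ⟨Q.center, max γ 1 * Q.side,
    mul_pos (lt_of_lt_of_le one_pos (le_max_right γ 1)) Q.side_pos⟩

/-- The dyadic subcube of `Q` of generation `j` with index `k`. -/
def dyadicSub (Q : Cube d) (j : ℕ) (k : Fin d → ℕ) : Cube d where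
  center := WithLp.toLp 2 fun i => Q.center i - Q.side / 2 + ((k i : ℝ) + 1 / 2) * (Q.side / 2 ^ j)
  side := Q.side / 2 ^ j
  side_pos := div_pos Q.side_pos (by positivity)

/-- The `2ℓ(Q)`-periodic even reflection map: `reflect Q x ∈ Q` and functions
defined on `Q` are extended outside `Q` by precomposing with `reflect Q`. -/
def reflect (Q : Cube d) (x : Euc d) : Euc d := WithLp.toLp 2 fun i =>
  (Q.center i - Q.side / 2) + Q.side -
    |(x i - (Q.center i - Q.side / 2) -
        2 * Q.side * ((⌊(x i - (Q.center i - Q.side / 2)) / (2 * Q.side)⌋ : ℤ) : ℝ)) - Q.side|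

end Cube

/-- `R` is a dyadic subcube of `Q`. -/
def IsDyadicSub {d : ℕ} (Q R : Cube d) : Prop :=
  ∃ (j : ℕ) (k : Fin d → ℕ), (∀ i, k i < 2 ^ j) ∧ R = Q.dyadicSub j k

/-- A collection of cubes is sparse if each `R` carries a subset `E R ⊆ R`
with `|E R| ≥ |R|/2`, the sets `E R` being pairwise disjoint. -/
def IsSparse {d : ℕ} (𝒮 : Set (Cube d)) : Prop :=
  ∃ E : Cube d → Set (Euc d),
    (∀ R ∈ 𝒮, MeasurableSet (E R) ∧ E R ⊆ R.toSet ∧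
      ENNReal.ofReal R.vol ≤ 2 * volume (E R)) ∧
    𝒮.Pairwise fun R R' => Disjoint (E R) (E R')

/-- The Hölder conjugate `p'` of `p`, as an extended real exponent. -/
def conjE (p : ℝ) : ℝ≥0∞ := if p = 1 then ⊤ else ENNReal.ofReal (p / (p - 1))

/-- The two-weight Muckenhoupt characteristic
`[ω,σ]_{A^α_{p,q}(Q)} = sup_{R ⊆ Q} |R|^α ⟨ω⟩_{q,R} ⟨σ⁻¹⟩_{p',R}`. -/
def muck {d : ℕ} (Q : Cube d) (p q α : ℝ) (ω σ : Euc d → ℝ) : ℝ≥0∞ :=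
  ⨆ R : {R : Cube d // R.toSet ⊆ Q.toSet},
    ENNReal.ofReal (R.1.vol ^ α) * R.1.lavg (ENNReal.ofReal q) ω *
      R.1.lavg (conjE p) fun x => (σ x)⁻¹

/-- The classical Muckenhoupt `A_p` characteristic
`[w]_{A_p} = sup_Q ⟨w⟩_{1,Q} ⟨w⁻¹⟩_{1/(p-1),Q}` over all cubes in `ℝ^d`. -/
def apChar (d : ℕ) (p : ℝ) (w : Euc d → ℝ) : ℝ≥0∞ :=
  ⨆ R : Cube d,
    R.lavg 1 w * R.lavg (if p = 1 then ⊤ else ENNReal.ofReal (1 / (p - 1))) fun x => (w x)⁻¹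

/-- The localized maximal function `M(w 1_R)(x) = sup_{S ⊆ R, x ∈ S} ⟨w⟩_{1,S}`. -/
def locMaxFn {d : ℕ} (R : Cube d) (w : Euc d → ℝ) (x : Euc d) : ℝ≥0∞ :=
  ⨆ S : {S : Cube d // S.toSet ⊆ R.toSet ∧ x ∈ S.toSet}, S.1.lavg 1 w

/-- The local Fujii–Wilson `A_∞(Q)` characteristic. -/
def ainf {d : ℕ} (Q : Cube d) (w : Euc d → ℝ) : ℝ≥0∞ :=
  ⨆ R : {R : Cube d // R.toSet ⊆ Q.toSet},
    (∫⁻ x in R.1.toSet, locMaxFn R.1 w x) / ∫⁻ x in R.1.toSet, ENNReal.ofReal (w x)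

/-- The weighted norm `‖g‖_{L^p_σ(A)} = (∫_A |g|^p σ^p)^{1/p}` (weight as multiplier). -/
def wLp {d : ℕ} (A : Set (Euc d)) (p : ℝ) (σ g : Euc d → ℝ) : ℝ≥0∞ :=
  (∫⁻ x in A, ENNReal.ofReal (|g x| * σ x) ^ p) ^ (1 / p)

/-- The fractional difference quotient
`f^{s,r}_A(x) = (∫_A |f(x)-f(y)|^r / |x-y|^{d+sr} dy)^{1/r}`. -/
def fsr {d : ℕ} (A : Set (Euc d)) (s r : ℝ) (f : Euc d → ℝ) (x : Euc d) : ℝ≥0∞ :=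
  (∫⁻ y in A, ENNReal.ofReal |f x - f y| ^ r / edist x y ^ ((d : ℝ) + s * r)) ^ (1 / r)

/-- `f^{s,r}_{3R}`, where `f` is extended outside `Q` by periodic reflection. -/
def fsr3 {d : ℕ} (Q : Cube d) (s r : ℝ) (f : Euc d → ℝ) (R : Cube d) (x : Euc d) : ℝ≥0∞ :=
  fsr (Cube.scale 3 R).toSet s r (fun y => f (Q.reflect y)) x

/-- The weighted weak norm `‖g‖_{L^{q,∞}_ω(Q)}` of an `ℝ≥0∞`-valued function. -/
def weakNE {d : ℕ} (Q : Cube d) (q : ℝ) (ω : Euc d → ℝ) (g : Euc d → ℝ≥0∞) : ℝ≥0∞ :=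
  ⨆ lam : ℝ≥0, (lam : ℝ≥0∞) *
    (∫⁻ x in Q.toSet ∩ {x | (lam : ℝ≥0∞) < g x}, ENNReal.ofReal (ω x) ^ q) ^ (1 / q)

/-- The weighted weak norm `‖g‖_{L^{q,∞}_ω(Q)}` of a real valued function. -/
def weakN {d : ℕ} (Q : Cube d) (q : ℝ) (ω g : Euc d → ℝ) : ℝ≥0∞ :=
  weakNE Q q ω fun x => ENNReal.ofReal |g x|

/-- The weighted Triebel–Lizorkin seminorm `[u]_{F^{s,σ}_{p,r}(Q)}`. -/
def fSemi {d : ℕ} (Q : Cube d) (p r s : ℝ) (σ u : Euc d → ℝ) : ℝ≥0∞ :=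
  (∫⁻ x in Q.toSet, fsr Q.toSet s r u x ^ p * ENNReal.ofReal (σ x) ^ p) ^ (1 / p)

section MuckOfApAux

open Cube

variable {d : ℕ}

lemma Cube.vol_pos (R : Cube d) : 0 < R.vol := pow_pos R.side_pos d

lemma Cube.toSet_eq_preimage (R : Cube d) :
    R.toSet = (MeasurableEquiv.toLp 2 (Fin d → ℝ)).symm ⁻¹'
      Set.univ.pi (fun i => Set.Ico (R.center i - R.side / 2) (R.center i + R.side / 2)) := by
  ext x
  simp [Cube.toSet, Set.mem_pi, Set.mem_Ico]

lemma Cube.measure_toSet (R : Cube d) : volume R.toSet = ENNReal.ofReal R.vol := by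
  rw [Cube.toSet_eq_preimage,
    (EuclideanSpace.volume_preserving_symm_measurableEquiv_toLp (Fin d)).measure_preimage
      (MeasurableSet.univ_pi fun _ => measurableSet_Ico).nullMeasurableSet, volume_pi_pi]
  have h : ∀ i : Fin d, volume (Set.Ico (R.center i - R.side / 2) (R.center i + R.side / 2))
      = ENNReal.ofReal R.side := by
    intro i; rw [Real.volume_Ico]; ring_nf
  simp_rw [h, Finset.prod_const, Finset.card_univ, Fintype.card_fin, Cube.vol,
    ← ENNReal.ofReal_pow R.side_pos.le]

/-- The normalized Lebesgue measure on a cube. -/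
def Cube.pmeas (R : Cube d) : Measure (Euc d) :=
  (ENNReal.ofReal R.vol)⁻¹ • volume.restrict R.toSet

instance (R : Cube d) : IsProbabilityMeasure R.pmeas := by
  constructor
  rw [Cube.pmeas, Measure.smul_apply, smul_eq_mul, Measure.restrict_apply_univ, R.measure_toSet]
  exact ENNReal.inv_mul_cancel (ENNReal.ofReal_pos.mpr R.vol_pos).ne' ENNReal.ofReal_ne_top

lemma Cube.lavg_eq_eLpNorm (R : Cube d) {t : ℝ≥0∞} (ht : t ≠ 0) (f : Euc d → ℝ) :
    R.lavg t f = eLpNorm f t R.pmeas := by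
  rcases eq_or_ne t ⊤ with h | h
  · subst h
    rw [Cube.lavg, if_pos rfl, eLpNorm_exponent_top, Cube.pmeas,
      eLpNormEssSup_ennreal_smul_measure (ENNReal.inv_ne_zero.mpr ENNReal.ofReal_ne_top), eLpNormEssSup]
    simp_rw [Real.enorm_eq_ofReal_abs]
  · rw [Cube.lavg, if_neg h, eLpNorm_eq_lintegral_rpow_enorm_toReal ht h, Cube.pmeas,
      lintegral_smul_measure]
    simp_rw [Real.enorm_eq_ofReal_abs, ENNReal.div_eq_inv_mul, smul_eq_mul]

lemma Cube.lavg_mono_exp (R : Cube d) {t₁ t₂ : ℝ≥0∞} (ht : t₁ ≠ 0) (h : t₁ ≤ t₂)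
    {f : Euc d → ℝ} (hf : Measurable f) : R.lavg t₁ f ≤ R.lavg t₂ f := by
  have ht₂ : t₂ ≠ 0 := fun h0 => ht (le_zero_iff.mp (h0 ▸ h))
  rw [R.lavg_eq_eLpNorm ht, R.lavg_eq_eLpNorm ht₂]
  exact eLpNorm_le_eLpNorm_of_exponent_le h hf.aestronglyMeasurable

lemma Cube.lavg_ne_zero (R : Cube d) {t : ℝ≥0∞} (ht : t ≠ 0) {f : Euc d → ℝ}
    (hf : ∀ x, f x ≠ 0) (hfm : Measurable f) : R.lavg t f ≠ 0 := by
  rw [R.lavg_eq_eLpNorm ht]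
  intro h0
  rw [eLpNorm_eq_zero_iff hfm.aestronglyMeasurable ht] at h0
  have hne : R.pmeas ≠ 0 := by
    intro h
    have h1 := measure_univ (μ := R.pmeas)
    rw [h] at h1
    simp at h1
  haveI : (MeasureTheory.ae R.pmeas).NeBot := ae_neBot.mpr hne
  obtain ⟨x, hx⟩ := h0.exists
  exact hf x (by simpa using hx)

lemma Cube.lavg_top (R : Cube d) (f : Euc d → ℝ) :
    R.lavg ⊤ f = essSup (fun x => ENNReal.ofReal |f x|) (volume.restrict R.toSet) := if_pos rfl

end MuckOfApAux

/-- For `w ∈ A_u`, `1 ≤ u ≤ p ≤ q` and `α = (u-1)(1/p - 1/q)`,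
`[w^{1/q}, w^{1/p}]_{A^α_{p,q}(Q)} ≤ [w]_{A_p}^{1/p} [w]_{A_u}^{1/p-1/q} (|Q|^u / w(Q))^{1/p-1/q}`;
in particular `(w^{1/q}, w^{1/p}) ∈ A^α_{p,q}(Q)`. -/
theorem muck_of_ap (d : ℕ) (Q : Cube d) (u p q : ℝ)
    (hu : 1 ≤ u) (hup : u ≤ p) (hpq : p ≤ q)
    (w : Euc d → ℝ) (hw : ∀ x, 0 < w x) (hwm : Measurable w)
    (hAu : apChar d u w ≠ ⊤) :
    muck Q p q ((u - 1) * (1 / p - 1 / q))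
        (fun x => w x ^ (1 / q)) (fun x => w x ^ (1 / p)) ≤
      apChar d p w ^ (1 / p) * apChar d u w ^ (1 / p - 1 / q) *
        (ENNReal.ofReal (Q.vol ^ u) /
            ∫⁻ x in Q.toSet, ENNReal.ofReal (w x)) ^ (1 / p - 1 / q) ∧
      muck Q p q ((u - 1) * (1 / p - 1 / q))
        (fun x => w x ^ (1 / q)) (fun x => w x ^ (1 / p)) ≠ ⊤ := by
  have hp1 : 1 ≤ p := hu.trans hup
  have hq1 : 1 ≤ q := hp1.trans hpq
  have hp0 : 0 < p := lt_of_lt_of_le one_pos hp1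
  have hq0 : 0 < q := lt_of_lt_of_le one_pos hq1
  have hu0 : 0 < u := lt_of_lt_of_le one_pos hu
  have hβ0 : (0:ℝ) ≤ 1 / p - 1 / q := sub_nonneg.mpr (one_div_le_one_div_of_le hp0 hpq)
  have hV0 : ∀ R : Cube d, ENNReal.ofReal R.vol ≠ 0 :=
    fun R => (ENNReal.ofReal_pos.mpr R.vol_pos).ne'
  have hVt : ∀ R : Cube d, ENNReal.ofReal R.vol ≠ ⊤ := fun _ => ENNReal.ofReal_ne_top
  have hwm' : Measurable fun x => ENNReal.ofReal (w x) := ENNReal.measurable_ofReal.comp hwm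
  have habs : ∀ x : Euc d, |w x| = w x := fun x => abs_of_pos (hw x)
  have habsi : ∀ x : Euc d, |(w x)⁻¹| = (w x)⁻¹ := fun x => abs_of_pos (inv_pos.mpr (hw x))
  have hW0 : ∀ R : Cube d, (∫⁻ x in R.toSet, ENNReal.ofReal (w x)) ≠ 0 := by
    intro R
    refine ((lintegral_pos_iff_support hwm').mpr ?_).ne'
    have hsupp : (Function.support fun x : Euc d => ENNReal.ofReal (w x)) = Set.univ :=
      Set.eq_univ_of_forall fun x => (ENNReal.ofReal_pos.mpr (hw x)).ne'
    rw [hsupp, Measure.restrict_apply_univ, R.measure_toSet]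
    exact ENNReal.ofReal_pos.mpr R.vol_pos
  have hSne : ∀ r : ℝ, 1 ≤ r → ∀ R : Cube d,
      (R.lavg (if r = 1 then ⊤ else ENNReal.ofReal (1 / (r - 1))) fun x => (w x)⁻¹) ≠ 0 := by
    intro r hr R
    refine R.lavg_ne_zero ?_ (fun x => inv_ne_zero (hw x).ne') hwm.inv
    split_ifs with h
    · simp
    · exact (ENNReal.ofReal_pos.mpr
        (one_div_pos.mpr (sub_pos.mpr (lt_of_le_of_ne hr (Ne.symm h))))).ne'
  have haveAU : ∀ R : Cube d,
      R.lavg 1 w * (R.lavg (if u = 1 then ⊤ else ENNReal.ofReal (1 / (u - 1)))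
        fun x => (w x)⁻¹) ≤ apChar d u w :=
    fun R => le_iSup (fun R : Cube d => R.lavg 1 w *
      R.lavg (if u = 1 then ⊤ else ENNReal.ofReal (1 / (u - 1))) fun x => (w x)⁻¹) R
  have haveAP : ∀ R : Cube d,
      R.lavg 1 w * (R.lavg (if p = 1 then ⊤ else ENNReal.ofReal (1 / (p - 1)))
        fun x => (w x)⁻¹) ≤ apChar d p w :=
    fun R => le_iSup (fun R : Cube d => R.lavg 1 w *
      R.lavg (if p = 1 then ⊤ else ENNReal.ofReal (1 / (p - 1))) fun x => (w x)⁻¹) R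
  have hlavg1 : ∀ R : Cube d, R.lavg 1 w
      = (∫⁻ x in R.toSet, ENNReal.ofReal (w x)) / ENNReal.ofReal R.vol := by
    intro R
    rw [Cube.lavg, if_neg ENNReal.one_ne_top]
    simp only [ENNReal.toReal_one, habs, one_div_one, ENNReal.rpow_one]
  have hWQt : (∫⁻ x in Q.toSet, ENNReal.ofReal (w x)) ≠ ⊤ := by
    intro htop
    apply hAu
    have h1 : Q.lavg 1 w * (Q.lavg (if u = 1 then ⊤ else ENNReal.ofReal (1 / (u - 1)))
        fun x => (w x)⁻¹) = ⊤ := by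
      rw [hlavg1 Q, htop, ENNReal.top_div_of_ne_top (hVt Q), ENNReal.top_mul (hSne u hu Q)]
    exact top_le_iff.mp (h1 ▸ haveAU Q)
  have hWRt : ∀ R : Cube d, R.toSet ⊆ Q.toSet →
      (∫⁻ x in R.toSet, ENNReal.ofReal (w x)) ≠ ⊤ :=
    fun R hR => ((lintegral_mono_set hR).trans_lt (lt_top_iff_ne_top.mpr hWQt)).ne
  -- the `ω`-factor
  have homega : ∀ R : Cube d, R.lavg (ENNReal.ofReal q) (fun x => w x ^ (1 / q))
      = ((∫⁻ x in R.toSet, ENNReal.ofReal (w x)) / ENNReal.ofReal R.vol) ^ (1 / q) := by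
    intro R
    have hptq : ∀ x : Euc d, ENNReal.ofReal |w x ^ (1 / q)| ^ q = ENNReal.ofReal (w x) := by
      intro x
      rw [abs_of_pos (Real.rpow_pos_of_pos (hw x) _), ← ENNReal.ofReal_rpow_of_pos (hw x),
        ← ENNReal.rpow_mul, one_div_mul_cancel hq0.ne', ENNReal.rpow_one]
    rw [Cube.lavg, if_neg ENNReal.ofReal_ne_top, ENNReal.toReal_ofReal hq0.le]
    simp_rw [hptq]
  -- the `σ`-factor
  have hsigma : ∀ R : Cube d, (R.lavg (conjE p) fun x => (w x ^ (1 / p))⁻¹)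
      = (R.lavg (if p = 1 then ⊤ else ENNReal.ofReal (1 / (p - 1)))
          fun x => (w x)⁻¹) ^ (1 / p) := by
    intro R
    rcases eq_or_lt_of_le hp1 with hp | hp
    · rw [← hp]
      simp [conjE, Cube.lavg]
    · have hps : (0:ℝ) < p - 1 := sub_pos.mpr hp
      have hpt : ∀ x : Euc d, ENNReal.ofReal |(w x ^ (1 / p))⁻¹| ^ (p / (p - 1))
          = ENNReal.ofReal |(w x)⁻¹| ^ (1 / (p - 1)) := by
        intro x
        rw [abs_of_pos (inv_pos.mpr (Real.rpow_pos_of_pos (hw x) _)), habsi x,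
          ← Real.rpow_neg (hw x).le, ← Real.rpow_neg_one (w x),
          ← ENNReal.ofReal_rpow_of_pos (hw x), ← ENNReal.ofReal_rpow_of_pos (hw x),
          ← ENNReal.rpow_mul, ← ENNReal.rpow_mul]
        congr 1
        field_simp
      rw [conjE, if_neg hp.ne', if_neg hp.ne', Cube.lavg, if_neg ENNReal.ofReal_ne_top,
        Cube.lavg, if_neg ENNReal.ofReal_ne_top,
        ENNReal.toReal_ofReal (by positivity : (0:ℝ) ≤ p / (p - 1)),
        ENNReal.toReal_ofReal (by positivity : (0:ℝ) ≤ 1 / (p - 1))]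
      simp_rw [hpt]
      rw [one_div_one_div, ← ENNReal.rpow_mul, one_div_div, mul_one_div]
  -- `V^(u-1) * V = V^u`
  have hVpow : ∀ R : Cube d,
      ENNReal.ofReal R.vol ^ (u - 1) * ENNReal.ofReal R.vol = ENNReal.ofReal R.vol ^ u := by
    intro R
    nth_rewrite 2 [← ENNReal.rpow_one (ENNReal.ofReal R.vol)]
    rw [← ENNReal.rpow_add _ _ (hV0 R) (hVt R)]
    congr 1
    ring
  -- the `S Q ≤ AU * V_Q / W_Q` bound
  have hWVQ0 : (∫⁻ x in Q.toSet, ENNReal.ofReal (w x)) / ENNReal.ofReal Q.vol ≠ 0 :=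
    (ENNReal.div_pos (hW0 Q) (hVt Q)).ne'
  have hWVQt : (∫⁻ x in Q.toSet, ENNReal.ofReal (w x)) / ENNReal.ofReal Q.vol ≠ ⊤ :=
    (ENNReal.div_lt_top hWQt (hV0 Q)).ne
  have hSQ : (Q.lavg (if u = 1 then ⊤ else ENNReal.ofReal (1 / (u - 1))) fun x => (w x)⁻¹)
      ≤ apChar d u w *
        (ENNReal.ofReal Q.vol / ∫⁻ x in Q.toSet, ENNReal.ofReal (w x)) := by
    have h1 := haveAU Q
    rw [hlavg1 Q, mul_comm] at h1
    have h2 := (ENNReal.le_div_iff_mul_le (Or.inl hWVQ0) (Or.inl hWVQt)).mpr h1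
    rwa [div_eq_mul_inv (apChar d u w), ENNReal.inv_div (Or.inl (hVt Q)) (Or.inl (hV0 Q))] at h2
  -- the doubling estimate
  have hdoub : ∀ R : Cube d, R.toSet ⊆ Q.toSet →
      ENNReal.ofReal R.vol ^ u / (∫⁻ x in R.toSet, ENNReal.ofReal (w x))
        ≤ apChar d u w * ENNReal.ofReal Q.vol ^ u
            / ∫⁻ x in Q.toSet, ENNReal.ofReal (w x) := by
    intro R hR
    rcases eq_or_lt_of_le hu with hu1 | hu1
    · -- u = 1
      subst hu1
      simp only [eq_self_iff_true, if_true] at hSQ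
      rw [Cube.lavg_top] at hSQ
      set M := essSup (fun x => ENNReal.ofReal |(w x)⁻¹|) (volume.restrict Q.toSet) with hM
      have hM0 : M ≠ 0 := by
        have h2 := hSne 1 le_rfl Q
        simp only [eq_self_iff_true, if_true] at h2
        rw [Cube.lavg_top] at h2
        rw [hM]
        exact h2
      have hMt : M ≠ ⊤ := by
        intro htop
        have h1 : apChar d 1 w *
            (ENNReal.ofReal Q.vol / ∫⁻ x in Q.toSet, ENNReal.ofReal (w x)) = ⊤ :=
          top_le_iff.mp (htop ▸ hSQ)
        rcases ENNReal.mul_eq_top.mp h1 with h | h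
        · exact (ENNReal.div_lt_top ENNReal.ofReal_ne_top (hW0 Q)).ne h.2
        · exact hAu h.1
      have hae : ∀ᵐ x ∂(volume.restrict R.toSet), M⁻¹ ≤ ENNReal.ofReal (w x) := by
        refine ae_restrict_of_ae_restrict_of_subset hR ?_
        filter_upwards [ENNReal.ae_le_essSup (μ := volume.restrict Q.toSet)
          (fun x => ENNReal.ofReal |(w x)⁻¹|)] with x hx
        rw [habsi x, ENNReal.ofReal_inv_of_pos (hw x)] at hx
        calc M⁻¹ ≤ ((ENNReal.ofReal (w x))⁻¹)⁻¹ := ENNReal.inv_le_inv.mpr hx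
          _ = ENNReal.ofReal (w x) := inv_inv _
      have hWR : M⁻¹ * ENNReal.ofReal R.vol ≤ ∫⁻ x in R.toSet, ENNReal.ofReal (w x) := by
        have h1 := lintegral_mono_ae hae
        rwa [setLIntegral_const, R.measure_toSet] at h1
      have h1 : ENNReal.ofReal R.vol / (∫⁻ x in R.toSet, ENNReal.ofReal (w x)) ≤ M := by
        rw [ENNReal.div_le_iff (hW0 R) (hWRt R hR)]
        calc ENNReal.ofReal R.vol = M * (M⁻¹ * ENNReal.ofReal R.vol) := by
              rw [← mul_assoc, ENNReal.mul_inv_cancel hM0 hMt, one_mul]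
          _ ≤ M * ∫⁻ x in R.toSet, ENNReal.ofReal (w x) := mul_le_mul_right hWR M
      rw [ENNReal.rpow_one, ENNReal.rpow_one]
      refine h1.trans (hSQ.trans_eq ?_)
      rw [mul_div_assoc]
    · -- 1 < u
      have hus : (0:ℝ) < u - 1 := sub_pos.mpr hu1
      have hconj : u.HolderConjugate (u / (u - 1)) := Real.HolderConjugate.conjExponent hu1
      have hfmeas : Measurable fun x : Euc d => ENNReal.ofReal (w x) ^ (1 / u) :=
        ENNReal.continuous_rpow_const.measurable.comp hwm'
      have hgmeas : Measurable fun x : Euc d => ENNReal.ofReal |(w x)⁻¹| ^ (1 / u) :=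
        ENNReal.continuous_rpow_const.measurable.comp
          (ENNReal.measurable_ofReal.comp hwm.inv.abs)
      have hH := ENNReal.lintegral_mul_le_Lp_mul_Lq (volume.restrict R.toSet) hconj
        hfmeas.aemeasurable hgmeas.aemeasurable
      have hfg : ∀ x : Euc d,
          ENNReal.ofReal (w x) ^ (1 / u) * ENNReal.ofReal |(w x)⁻¹| ^ (1 / u) = 1 := by
        intro x
        rw [← ENNReal.mul_rpow_of_nonneg _ _ (one_div_nonneg.mpr hu0.le), habsi x,
          ← ENNReal.ofReal_mul (hw x).le, mul_inv_cancel₀ (hw x).ne', ENNReal.ofReal_one,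
          ENNReal.one_rpow]
      have hfu : ∀ x : Euc d,
          (ENNReal.ofReal (w x) ^ (1 / u)) ^ u = ENNReal.ofReal (w x) := by
        intro x; rw [← ENNReal.rpow_mul, one_div_mul_cancel hu0.ne', ENNReal.rpow_one]
      have hgu : ∀ x : Euc d, (ENNReal.ofReal |(w x)⁻¹| ^ (1 / u)) ^ (u / (u - 1))
          = ENNReal.ofReal |(w x)⁻¹| ^ (1 / (u - 1)) := by
        intro x
        rw [← ENNReal.rpow_mul]
        congr 1
        field_simp
      simp only [Pi.mul_apply] at hH
      simp_rw [hfg, hfu, hgu] at hH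
      rw [lintegral_one, Measure.restrict_apply_univ, R.measure_toSet, one_div_div] at hH
      have hH2 := ENNReal.rpow_le_rpow hH hu0.le
      rw [ENNReal.mul_rpow_of_nonneg _ _ hu0.le, ← ENNReal.rpow_mul, ← ENNReal.rpow_mul,
        one_div_mul_cancel hu0.ne', ENNReal.rpow_one,
        (show (u - 1) / u * u = u - 1 by field_simp)] at hH2
      have h3 : ENNReal.ofReal R.vol ^ u / (∫⁻ x in R.toSet, ENNReal.ofReal (w x))
          ≤ (∫⁻ x in R.toSet, ENNReal.ofReal |(w x)⁻¹| ^ (1 / (u - 1))) ^ (u - 1) := by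
        rw [ENNReal.div_le_iff (hW0 R) (hWRt R hR)]
        exact hH2.trans_eq (mul_comm _ _)
      have h4 : (∫⁻ x in R.toSet, ENNReal.ofReal |(w x)⁻¹| ^ (1 / (u - 1)))
          ≤ ∫⁻ x in Q.toSet, ENNReal.ofReal |(w x)⁻¹| ^ (1 / (u - 1)) := lintegral_mono_set hR
      have h5 := ENNReal.rpow_le_rpow h4 hus.le
      have hSQval : (Q.lavg (if u = 1 then ⊤ else ENNReal.ofReal (1 / (u - 1)))
            fun x => (w x)⁻¹)
          = ((∫⁻ x in Q.toSet, ENNReal.ofReal |(w x)⁻¹| ^ (1 / (u - 1)))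
              / ENNReal.ofReal Q.vol) ^ (u - 1) := by
        rw [if_neg hu1.ne', Cube.lavg, if_neg ENNReal.ofReal_ne_top,
          ENNReal.toReal_ofReal (one_div_nonneg.mpr hus.le), one_div_one_div]
      rw [hSQval] at hSQ
      have hsplit : (∫⁻ x in Q.toSet, ENNReal.ofReal |(w x)⁻¹| ^ (1 / (u - 1))) ^ (u - 1)
          = ((∫⁻ x in Q.toSet, ENNReal.ofReal |(w x)⁻¹| ^ (1 / (u - 1)))
              / ENNReal.ofReal Q.vol) ^ (u - 1) * ENNReal.ofReal Q.vol ^ (u - 1) := by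
        rw [← ENNReal.mul_rpow_of_nonneg _ _ hus.le,
          ENNReal.div_mul_cancel (hV0 Q) (hVt Q)]
      refine h3.trans (h5.trans ?_)
      rw [hsplit]
      calc ((∫⁻ x in Q.toSet, ENNReal.ofReal |(w x)⁻¹| ^ (1 / (u - 1)))
              / ENNReal.ofReal Q.vol) ^ (u - 1) * ENNReal.ofReal Q.vol ^ (u - 1)
          ≤ apChar d u w *
              (ENNReal.ofReal Q.vol / ∫⁻ x in Q.toSet, ENNReal.ofReal (w x)) *
              ENNReal.ofReal Q.vol ^ (u - 1) := mul_le_mul_left hSQ _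
        _ = apChar d u w * ENNReal.ofReal Q.vol ^ u
              / ∫⁻ x in Q.toSet, ENNReal.ofReal (w x) := by
            rw [div_eq_mul_inv, div_eq_mul_inv, ← hVpow Q]
            ring
  -- the per-cube estimate
  have key : ∀ R : Cube d, R.toSet ⊆ Q.toSet →
      ENNReal.ofReal (R.vol ^ ((u - 1) * (1 / p - 1 / q)))
          * R.lavg (ENNReal.ofReal q) (fun x => w x ^ (1 / q))
          * R.lavg (conjE p) (fun x => (w x ^ (1 / p))⁻¹)
        ≤ apChar d p w ^ (1 / p) * apChar d u w ^ (1 / p - 1 / q) *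
            (ENNReal.ofReal (Q.vol ^ u) /
              ∫⁻ x in Q.toSet, ENNReal.ofReal (w x)) ^ (1 / p - 1 / q) := by
    intro R hR
    rw [homega R, hsigma R]
    set X := (∫⁻ x in R.toSet, ENNReal.ofReal (w x)) / ENNReal.ofReal R.vol with hXdef
    have hX0 : X ≠ 0 := (ENNReal.div_pos (hW0 R) (hVt R)).ne'
    have hXt : X ≠ ⊤ := (ENNReal.div_lt_top (hWRt R hR) (hV0 R)).ne
    have hsplit : X ^ (1 / q) = X ^ (1 / p) * X ^ (-(1 / p - 1 / q)) := by
      rw [← ENNReal.rpow_add _ _ hX0 hXt]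
      congr 1
      ring
    rw [hsplit]
    have hreorg : ENNReal.ofReal (R.vol ^ ((u - 1) * (1 / p - 1 / q)))
          * (X ^ (1 / p) * X ^ (-(1 / p - 1 / q)))
          * (R.lavg (if p = 1 then ⊤ else ENNReal.ofReal (1 / (p - 1)))
              fun x => (w x)⁻¹) ^ (1 / p)
        = ENNReal.ofReal (R.vol ^ ((u - 1) * (1 / p - 1 / q))) * X ^ (-(1 / p - 1 / q))
          * (X * R.lavg (if p = 1 then ⊤ else ENNReal.ofReal (1 / (p - 1)))
              fun x => (w x)⁻¹) ^ (1 / p) := by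
      rw [ENNReal.mul_rpow_of_nonneg _ _ (one_div_nonneg.mpr hp0.le)]
      ring
    rw [hreorg]
    have hterm1 : ENNReal.ofReal (R.vol ^ ((u - 1) * (1 / p - 1 / q)))
          * X ^ (-(1 / p - 1 / q))
        = (ENNReal.ofReal R.vol ^ u
            / ∫⁻ x in R.toSet, ENNReal.ofReal (w x)) ^ (1 / p - 1 / q) := by
      rw [← ENNReal.ofReal_rpow_of_pos R.vol_pos, ENNReal.rpow_neg, ← ENNReal.inv_rpow,
        hXdef, ENNReal.inv_div (Or.inl (hVt R)) (Or.inl (hV0 R)), ENNReal.rpow_mul,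
        ← ENNReal.mul_rpow_of_nonneg _ _ hβ0]
      congr 1
      rw [div_eq_mul_inv, div_eq_mul_inv, ← mul_assoc, hVpow R]
    have hterm2 : X * (R.lavg (if p = 1 then ⊤ else ENNReal.ofReal (1 / (p - 1)))
        fun x => (w x)⁻¹) ≤ apChar d p w := by
      have h1 := haveAP R
      rwa [hlavg1 R] at h1
    calc ENNReal.ofReal (R.vol ^ ((u - 1) * (1 / p - 1 / q))) * X ^ (-(1 / p - 1 / q))
          * (X * R.lavg (if p = 1 then ⊤ else ENNReal.ofReal (1 / (p - 1)))
              fun x => (w x)⁻¹) ^ (1 / p)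
        ≤ (apChar d u w * ENNReal.ofReal Q.vol ^ u
              / ∫⁻ x in Q.toSet, ENNReal.ofReal (w x)) ^ (1 / p - 1 / q)
            * apChar d p w ^ (1 / p) := by
          rw [hterm1]
          exact mul_le_mul' (ENNReal.rpow_le_rpow (hdoub R hR) hβ0)
            (ENNReal.rpow_le_rpow hterm2 (one_div_nonneg.mpr hp0.le))
      _ = apChar d p w ^ (1 / p) * apChar d u w ^ (1 / p - 1 / q) *
            (ENNReal.ofReal (Q.vol ^ u) /
              ∫⁻ x in Q.toSet, ENNReal.ofReal (w x)) ^ (1 / p - 1 / q) := by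
          rw [← ENNReal.ofReal_rpow_of_pos Q.vol_pos, mul_div_assoc,
            ENNReal.mul_rpow_of_nonneg _ _ hβ0]
          ring
  have hbound : muck Q p q ((u - 1) * (1 / p - 1 / q))
      (fun x => w x ^ (1 / q)) (fun x => w x ^ (1 / p)) ≤
      apChar d p w ^ (1 / p) * apChar d u w ^ (1 / p - 1 / q) *
        (ENNReal.ofReal (Q.vol ^ u) /
          ∫⁻ x in Q.toSet, ENNReal.ofReal (w x)) ^ (1 / p - 1 / q) := by
    refine iSup_le ?_
    rintro ⟨R, hR⟩
    exact key R hR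
  refine ⟨hbound, ?_⟩
  have hAPne : apChar d p w ≠ ⊤ := by
    refine ne_top_of_le_ne_top hAu (iSup_mono fun R => ?_)
    refine mul_le_mul_right ?_ _
    by_cases hp' : p = 1
    · have hu' : u = 1 := le_antisymm (hp' ▸ hup) hu
      rw [hp', hu']
    · have hpgt : 1 < p := lt_of_le_of_ne hp1 (Ne.symm hp')
      have ht1 : ENNReal.ofReal (1 / (p - 1)) ≠ 0 :=
        (ENNReal.ofReal_pos.mpr (one_div_pos.mpr (sub_pos.mpr hpgt))).ne'
      rw [if_neg hp']
      by_cases hu' : u = 1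
      · rw [if_pos hu']
        exact R.lavg_mono_exp ht1 le_top hwm.inv
      · have hugt : 1 < u := lt_of_le_of_ne hu (Ne.symm hu')
        rw [if_neg hu']
        exact R.lavg_mono_exp ht1 (ENNReal.ofReal_le_ofReal
          (one_div_le_one_div_of_le (sub_pos.mpr hugt) (by linarith))) hwm.inv
  have hRHSne : apChar d p w ^ (1 / p) * apChar d u w ^ (1 / p - 1 / q) *
      (ENNReal.ofReal (Q.vol ^ u) /
        ∫⁻ x in Q.toSet, ENNReal.ofReal (w x)) ^ (1 / p - 1 / q) ≠ ⊤ := by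
    refine ENNReal.mul_ne_top (ENNReal.mul_ne_top ?_ ?_) ?_
    · exact ENNReal.rpow_ne_top_of_nonneg (one_div_nonneg.mpr hp0.le) hAPne
    · exact ENNReal.rpow_ne_top_of_nonneg hβ0 hAu
    · exact ENNReal.rpow_ne_top_of_nonneg hβ0
        (ENNReal.div_lt_top ENNReal.ofReal_ne_top (hW0 Q)).ne
  exact ne_top_of_le_ne_top hRHSne hbound
end
end

section
/- Let $Q \subseteq \mathbb{R}^d$ be a cube, $1 \le p \le q < \infty$ with $\alpha = \frac1q + \frac1{p'}$, and let $(\omega,\sigma) \in A^{\alpha}_{p,q}(Q)$ with $\omega^q \in A_\infty(Q)$. Then there exists $0 \le \beta < \alpha$ such that $(\omega,\sigma) \in A^{\beta}_{p,q}(Q)$ with $[\omega,\sigma]_{A^{\beta}_{p,q}(Q)} \le 2\,|Q|^{\beta-\alpha}\,[\omega,\sigma]_{A^{\alpha}_{p,q}(Q)}$. -/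
open MeasureTheory
open scoped ENNReal NNReal

noncomputable section

namespace CubeAux
variable {d : ℕ}

def corner (R : Cube d) (i : Fin d) : ℝ := R.center i - R.side / 2

lemma mem_toSet_iff (R : Cube d) (x : Euc d) :
    x ∈ R.toSet ↔ ∀ i, corner R i ≤ x i ∧ x i < corner R i + R.side := by
  unfold Cube.toSet corner
  constructor
  · intro h i; have := h i; constructor <;> [exact this.1; linarith [this.2]]
  · intro h i; have := h i; constructor <;> [exact this.1; linarith [this.2]]

lemma vol_pos (R : Cube d) : 0 < R.vol := pow_pos R.side_pos d

lemma subset_toSet {S R : Cube d}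
    (h : ∀ i, corner R i ≤ corner S i ∧ corner S i + S.side ≤ corner R i + R.side) :
    S.toSet ⊆ R.toSet := by
  intro x hx
  rw [mem_toSet_iff] at hx ⊢
  intro i
  exact ⟨(h i).1.trans (hx i).1, lt_of_lt_of_le (hx i).2 (h i).2⟩

lemma coord_of_subset {S R : Cube d} (h : S.toSet ⊆ R.toSet) (i : Fin d) :
    corner R i ≤ corner S i ∧ corner S i + S.side ≤ corner R i + R.side := by
  have hx0 : (WithLp.toLp 2 (fun j => corner S j) : Euc d) ∈ S.toSet := by
    rw [mem_toSet_iff]; intro j; simp only [WithLp.ofLp_toLp]; exact ⟨le_rfl, by linarith [S.side_pos]⟩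
  have h1 := (mem_toSet_iff R _).mp (h hx0) i
  refine ⟨h1.1, ?_⟩
  by_contra hcon
  push_neg at hcon
  set v : ℝ := max (corner S i) (corner R i + R.side) with hv
  have hx1 : (WithLp.toLp 2 (Function.update (fun j => corner S j) i v) : Euc d) ∈ S.toSet := by
    rw [mem_toSet_iff]; intro j; simp only [WithLp.ofLp_toLp]
    rcases eq_or_ne j i with rfl | hj
    · rw [Function.update_self]
      exact ⟨le_max_left _ _, max_lt (by linarith [S.side_pos]) hcon⟩
    · rw [Function.update_of_ne hj]
      exact ⟨le_rfl, by linarith [S.side_pos]⟩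
  have h2 := (mem_toSet_iff R _).mp (h hx1) i
  rw [WithLp.ofLp_toLp, Function.update_self] at h2
  exact absurd h2.2 (not_lt.mpr (le_max_right _ _))

lemma side_le_of_subset {S R : Cube d} (hd : 0 < d) (h : S.toSet ⊆ R.toSet) :
    S.side ≤ R.side := by
  have i : Fin d := ⟨0, hd⟩
  have := coord_of_subset h i
  linarith [this.1, this.2]

lemma toSet_eq_preimage (R : Cube d) :
    R.toSet = (MeasurableEquiv.toLp 2 (Fin d → ℝ)).symm ⁻¹'
      (Set.univ.pi fun i => Set.Ico (corner R i) (corner R i + R.side)) := by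
  ext x
  rw [mem_toSet_iff]
  simp only [Set.mem_preimage, Set.mem_pi, Set.mem_univ, forall_true_left, Set.mem_Ico]
  rfl

lemma measurableSet_toSet (R : Cube d) : MeasurableSet R.toSet := by
  rw [toSet_eq_preimage]
  exact (MeasurableEquiv.toLp 2 (Fin d → ℝ)).symm.measurable
    (MeasurableSet.univ_pi fun i => measurableSet_Ico)

lemma volume_toSet (R : Cube d) : volume R.toSet = ENNReal.ofReal R.vol := by
  rw [toSet_eq_preimage,
    (EuclideanSpace.volume_preserving_symm_measurableEquiv_toLp (Fin d)).measure_preimage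
      ((MeasurableSet.univ_pi fun i => measurableSet_Ico).nullMeasurableSet),
    volume_pi_pi]
  simp only [Real.volume_Ico, add_sub_cancel_left]
  rw [Finset.prod_const, Finset.card_univ, Fintype.card_fin,
    ← ENNReal.ofReal_pow R.side_pos.le]
  rfl

/-- cube of side `ℓ` containing `S` within `R` (for `S.side ≤ ℓ ≤ R.side`). -/
def hull (S R : Cube d) (ℓ : ℝ) (hl : 0 < ℓ) : Cube d :=
  ⟨(WithLp.toLp 2 fun i => min (corner S i) (corner R i + R.side - ℓ) + ℓ / 2), ℓ, hl⟩

lemma hull_side (S R : Cube d) (ℓ : ℝ) (hl : 0 < ℓ) : (hull S R ℓ hl).side = ℓ := rfl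

lemma corner_hull (S R : Cube d) (ℓ : ℝ) (hl : 0 < ℓ) (i : Fin d) :
    corner (hull S R ℓ hl) i = min (corner S i) (corner R i + R.side - ℓ) := by
  show min (corner S i) (corner R i + R.side - ℓ) + ℓ / 2 - ℓ / 2 = _
  ring

lemma subset_hull {S R : Cube d} (h : S.toSet ⊆ R.toSet) {ℓ : ℝ} (hl : 0 < ℓ)
    (hs : S.side ≤ ℓ) : S.toSet ⊆ (hull S R ℓ hl).toSet := by
  apply subset_toSet
  intro i
  rw [corner_hull]
  have hc := coord_of_subset h i
  constructor
  · exact min_le_left _ _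
  · rcases le_total (corner S i) (corner R i + R.side - ℓ) with hm | hm
    · rw [min_eq_left hm]; show _ ≤ _ + ℓ; linarith
    · rw [min_eq_right hm]; show _ ≤ _ + ℓ; linarith [hc.2]

lemma hull_subset {S R : Cube d} (h : S.toSet ⊆ R.toSet) {ℓ : ℝ} (hl : 0 < ℓ)
    (hR : ℓ ≤ R.side) : (hull S R ℓ hl).toSet ⊆ R.toSet := by
  apply subset_toSet
  intro i
  rw [corner_hull]
  have hc := coord_of_subset h i
  constructor
  · exact le_min (hc.1) (by linarith)
  · show min _ _ + ℓ ≤ _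
    calc min (corner S i) (corner R i + R.side - ℓ) + ℓ
        ≤ (corner R i + R.side - ℓ) + ℓ := by
          linarith [min_le_right (corner S i) (corner R i + R.side - ℓ)]
      _ = corner R i + R.side := by ring

lemma hull_mono {S R : Cube d} {ℓ ℓ' : ℝ} (hl : 0 < ℓ) (hl' : 0 < ℓ')
    (hle : ℓ ≤ ℓ') : (hull S R ℓ hl).toSet ⊆ (hull S R ℓ' hl').toSet := by
  apply subset_toSet
  intro i
  rw [corner_hull, corner_hull]
  constructor
  · exact min_le_min le_rfl (by linarith)
  · show min _ _ + ℓ ≤ min _ _ + ℓ'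
    rcases le_total (corner S i) (corner R i + R.side - ℓ') with hm | hm
    · rw [min_eq_left hm]
      exact add_le_add (min_le_left _ _) hle
    · rw [min_eq_right hm]
      have : min (corner S i) (corner R i + R.side - ℓ) ≤ corner R i + R.side - ℓ :=
        min_le_right _ _
      linarith

/-- integral of `w` over a cube -/
def W (w : Euc d → ℝ) (R : Cube d) : ℝ≥0∞ := ∫⁻ x in R.toSet, ENNReal.ofReal (w x)

lemma W_mono (w : Euc d → ℝ) {S R : Cube d} (h : S.toSet ⊆ R.toSet) : W w S ≤ W w R :=
  lintegral_mono' (Measure.restrict_mono h le_rfl) le_rfl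

lemma W_pos {w : Euc d → ℝ} (hw : ∀ x, 0 < w x) (hwm : Measurable w) (R : Cube d) :
    0 < W w R := by
  rw [W, lintegral_pos_iff_support hwm.ennreal_ofReal]
  have : (Function.support fun x => ENNReal.ofReal (w x)) = Set.univ := by
    ext x; simp [Function.support, ENNReal.ofReal_pos, hw x]
  rw [this, Measure.restrict_apply_univ, volume_toSet]
  exact ENNReal.ofReal_pos.mpr (vol_pos R)

lemma lavg_one_ge {w : Euc d → ℝ} (hw : ∀ x, 0 < w x) (T : Cube d) {S : Cube d}
    (hST : S.toSet ⊆ T.toSet) :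
    W w S / ENNReal.ofReal T.vol ≤ T.lavg 1 w := by
  rw [Cube.lavg, if_neg (by simp)]
  simp only [ENNReal.toReal_one, ENNReal.rpow_one, one_div_one]
  have habs : (∫⁻ x in T.toSet, ENNReal.ofReal |w x|) = W w T :=
    lintegral_congr fun x => by rw [abs_of_pos (hw x)]
  rw [habs]
  exact ENNReal.div_le_div_right (W_mono w hST) _
lemma step {Q : Cube d} {w : Euc d → ℝ} (hw : ∀ x, 0 < w x) (hwm : Measurable w)
    (hd : 0 < d) (hWQ : W w Q ≠ ⊤) {N : ℕ} (hN : 0 < N)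
    (hA : ainf Q w ≤ (N : ℝ≥0∞) / 4)
    {S R : Cube d} (hSR : S.toSet ⊆ R.toSet) (hRQ : R.toSet ⊆ Q.toSet)
    (hside : S.side * 2 ^ N ≤ R.side) :
    W w S ≤ W w R / 2 := by
  have hspos := S.side_pos
  have hlpos : ∀ k : ℕ, (0:ℝ) < 2 ^ k * S.side := fun k => by positivity
  set T : ℕ → Cube d := fun k => hull S R (2 ^ k * S.side) (hlpos k) with hT
  have hTside : ∀ k, (T k).side = 2 ^ k * S.side := fun k => hull_side _ _ _ _
  have hTsub : ∀ k, k ≤ N → (T k).toSet ⊆ R.toSet := by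
    intro k hk
    refine hull_subset hSR _ ?_
    calc (2:ℝ) ^ k * S.side ≤ 2 ^ N * S.side := by
          have : (2:ℝ) ^ k ≤ 2 ^ N := pow_le_pow_right₀ one_le_two hk
          nlinarith
      _ ≤ R.side := by nlinarith [hside]
  have hSsubT : ∀ k, S.toSet ⊆ (T k).toSet := by
    intro k
    refine subset_hull hSR _ ?_
    have : (1:ℝ) ≤ 2 ^ k := one_le_pow₀ one_le_two
    nlinarith
  have hTmono : ∀ k, (T k).toSet ⊆ (T (k+1)).toSet := by
    intro k
    refine hull_mono _ _ ?_
    have : (2:ℝ) ^ k ≤ 2 ^ (k+1) := pow_le_pow_right₀ one_le_two (Nat.le_succ k)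
    nlinarith
  have hvolT : ∀ k, ENNReal.ofReal ((T k).vol) ≠ 0 ∧ ENNReal.ofReal ((T k).vol) ≠ ⊤ :=
    fun k => ⟨(ENNReal.ofReal_pos.mpr (vol_pos _)).ne', ENNReal.ofReal_ne_top⟩
  -- pointwise lower bound for the maximal function
  have hpt : ∀ k, k ≤ N → ∀ x ∈ (T k).toSet,
      W w S / ENNReal.ofReal ((T k).vol) ≤ locMaxFn R w x := by
    intro k hk x hx
    refine le_trans (lavg_one_ge hw (T k) (hSsubT k)) ?_
    exact le_iSup (fun S' : {S' : Cube d // S'.toSet ⊆ R.toSet ∧ x ∈ S'.toSet} =>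
      S'.1.lavg 1 w) ⟨T k, hTsub k hk, hx⟩
  -- annulus volume lower bound
  have hann : ∀ k, ENNReal.ofReal ((T (k+1)).vol) / 2 ≤
      volume ((T (k+1)).toSet \ (T k).toSet) := by
    intro k
    rw [measure_diff (hTmono k) (measurableSet_toSet (T k)).nullMeasurableSet
      (by rw [volume_toSet]; exact ENNReal.ofReal_ne_top), volume_toSet, volume_toSet]
    rw [← ENNReal.ofReal_sub _ (vol_pos (T k)).le]
    rw [ENNReal.div_le_iff (two_ne_zero) (ENNReal.ofNat_ne_top)]
    have h2d : (2:ℝ) ≤ 2 ^ d := by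
      calc (2:ℝ) = 2 ^ 1 := (pow_one 2).symm
        _ ≤ 2 ^ d := pow_le_pow_right₀ one_le_two hd
    have hv1 : (T (k+1)).vol = 2 ^ d * (T k).vol := by
      rw [Cube.vol, Cube.vol, hTside, hTside,
        show (2:ℝ) ^ (k+1) * S.side = 2 * (2 ^ k * S.side) by ring, mul_pow]
    have hvk := vol_pos (T k)
    rw [show (2:ℝ≥0∞) = ENNReal.ofReal 2 from (ENNReal.ofReal_ofNat 2).symm,
      ← ENNReal.ofReal_mul (by nlinarith : (0:ℝ) ≤ (T (k+1)).vol - (T k).vol)]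
    apply ENNReal.ofReal_le_ofReal
    rw [hv1]
    nlinarith
  -- lower bound on each annulus integral
  have hannint : ∀ k, k + 1 ≤ N →
      W w S / 2 ≤ ∫⁻ x in (T (k+1)).toSet \ (T k).toSet, locMaxFn R w x := by
    intro k hk
    set v := ENNReal.ofReal ((T (k+1)).vol) with hv
    have hle : ∀ x ∈ (T (k+1)).toSet \ (T k).toSet, W w S / v ≤ locMaxFn R w x :=
      fun x hx => hpt (k+1) hk x hx.1
    have hmeas : MeasurableSet ((T (k+1)).toSet \ (T k).toSet) :=
      (measurableSet_toSet _).diff (measurableSet_toSet _)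
    calc W w S / 2 = (W w S / v) * (v / 2) := by
          have hmm : (W w S / v) * (v / 2) = W w S * (v⁻¹ * v) / 2 := by
            simp only [div_eq_mul_inv]; ring
          rw [hmm, ENNReal.inv_mul_cancel (hvolT (k+1)).1 (hvolT (k+1)).2, mul_one]
      _ ≤ (W w S / v) * volume ((T (k+1)).toSet \ (T k).toSet) :=
          mul_le_mul_right (hann k) _
      _ = ∫⁻ _ in (T (k+1)).toSet \ (T k).toSet, (W w S / v) :=
          (setLIntegral_const _ _).symm
      _ ≤ ∫⁻ x in (T (k+1)).toSet \ (T k).toSet, locMaxFn R w x :=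
          setLIntegral_mono' hmeas hle
  have hmain : ∀ k, k ≤ N →
      (k : ℝ≥0∞) * (W w S / 2) ≤ ∫⁻ x in (T k).toSet, locMaxFn R w x := by
    intro k
    induction k with
    | zero => intro _; simp
    | succ n ih =>
      intro hk
      have hun : (T (n+1)).toSet = (T n).toSet ∪ ((T (n+1)).toSet \ (T n).toSet) :=
        (Set.union_diff_cancel (hTmono n)).symm
      rw [hun, lintegral_union ((measurableSet_toSet _).diff (measurableSet_toSet _))
        disjoint_sdiff_self_right]
      have h1 := ih (le_of_lt (Nat.lt_of_succ_le hk))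
      have h2 := hannint n hk
      calc ((n+1 : ℕ) : ℝ≥0∞) * (W w S / 2)
          = (n:ℝ≥0∞) * (W w S / 2) + (W w S / 2) := by push_cast; ring
        _ ≤ _ := add_le_add h1 h2
  have hint : ((N:ℝ≥0∞)) * (W w S / 2) ≤ ∫⁻ x in R.toSet, locMaxFn R w x :=
    (hmain N le_rfl).trans
      (lintegral_mono' (Measure.restrict_mono (hTsub N le_rfl) le_rfl) le_rfl)
  have hWR0 : W w R ≠ 0 := (W_pos hw hwm R).ne'
  have hWQlt : W w Q < ⊤ := lt_of_le_of_ne le_top hWQ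
  have hWRt : W w R ≠ ⊤ := (lt_of_le_of_lt (W_mono w hRQ) hWQlt).ne
  have hWSt : W w S ≠ ⊤ := (lt_of_le_of_lt (W_mono w (hSR.trans hRQ)) hWQlt).ne
  have hdiv : (∫⁻ x in R.toSet, locMaxFn R w x) / (W w R) ≤ ainf Q w :=
    le_iSup (fun R' : {R' : Cube d // R'.toSet ⊆ Q.toSet} =>
      (∫⁻ x in R'.1.toSet, locMaxFn R'.1 w x) /
        ∫⁻ x in R'.1.toSet, ENNReal.ofReal (w x)) ⟨R, hRQ⟩
  have hint2 : (∫⁻ x in R.toSet, locMaxFn R w x) ≤ (N:ℝ≥0∞)/4 * W w R :=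
    (ENNReal.div_le_iff hWR0 hWRt).mp (hdiv.trans hA)
  have hfin : (N:ℝ≥0∞) * (W w S / 2) ≤ (N:ℝ≥0∞)/4 * W w R := hint.trans hint2
  set a := (W w S).toReal with ha
  set b := (W w R).toReal with hb
  have hb0 : 0 ≤ b := ENNReal.toReal_nonneg
  have hrhs_ne : (N:ℝ≥0∞)/4 * W w R ≠ ⊤ :=
    ENNReal.mul_ne_top (ENNReal.div_lt_top (ENNReal.natCast_ne_top N) (by norm_num)).ne hWRt
  have hreal : (N:ℝ) * (a/2) ≤ (N:ℝ)/4 * b := by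
    have h := ENNReal.toReal_mono hrhs_ne hfin
    rw [ENNReal.toReal_mul, ENNReal.toReal_mul, ENNReal.toReal_div, ENNReal.toReal_div,
      ENNReal.toReal_natCast] at h
    simpa using h
  have hN1 : (1:ℝ) ≤ N := by exact_mod_cast hN
  have ha0 : 0 ≤ a := ENNReal.toReal_nonneg
  have hab : a ≤ b / 2 := by nlinarith
  calc W w S = ENNReal.ofReal a := (ENNReal.ofReal_toReal hWSt).symm
    _ ≤ ENNReal.ofReal (b/2) := ENNReal.ofReal_le_ofReal hab
    _ = ENNReal.ofReal b / ENNReal.ofReal 2 := ENNReal.ofReal_div_of_pos two_pos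
    _ = W w R / 2 := by rw [ENNReal.ofReal_toReal hWRt, ENNReal.ofReal_ofNat]

lemma decay {Q : Cube d} {w : Euc d → ℝ} (hw : ∀ x, 0 < w x) (hwm : Measurable w)
    (hd : 0 < d) (hWQ : W w Q ≠ ⊤) {N : ℕ} (hN : 0 < N)
    (hA : ainf Q w ≤ (N : ℝ≥0∞) / 4) :
    ∀ m : ℕ, ∀ S : Cube d, S.toSet ⊆ Q.toSet → S.side * 2 ^ (N * m) ≤ Q.side →
      W w S ≤ (2:ℝ≥0∞)⁻¹ ^ m * W w Q := by
  intro m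
  induction m with
  | zero => intro S hS _; simpa using W_mono w hS
  | succ n ih =>
    intro S hSQ hside
    have hspos := S.side_pos
    have hl : (0:ℝ) < 2 ^ N * S.side := by positivity
    set R := hull S Q (2 ^ N * S.side) hl with hR
    have h2N : (1:ℝ) ≤ 2 ^ N := one_le_pow₀ one_le_two
    have hRS : S.toSet ⊆ R.toSet := subset_hull hSQ hl (by nlinarith)
    have hexp : (2:ℝ) ^ N * 2 ^ (N*n) = 2 ^ (N*(n+1)) := by
      rw [← pow_add]; congr 1; ring
    have hmono : (2:ℝ)^N ≤ 2 ^ (N*(n+1)) :=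
      pow_le_pow_right₀ one_le_two (Nat.le_mul_of_pos_right N (Nat.succ_pos n))
    have h2big : (2:ℝ) ^ N * S.side ≤ Q.side := by nlinarith
    have hRQ : R.toSet ⊆ Q.toSet := hull_subset hSQ hl h2big
    have hRside : R.side = 2 ^ N * S.side := hull_side _ _ _ _
    have hstep : W w S ≤ W w R / 2 :=
      step hw hwm hd hWQ hN hA hRS hRQ (by rw [hRside]; nlinarith)
    have hih : W w R ≤ (2:ℝ≥0∞)⁻¹ ^ n * W w Q := by
      apply ih R hRQ
      rw [hRside]
      calc 2 ^ N * S.side * 2 ^ (N * n) = S.side * ((2:ℝ) ^ N * 2 ^ (N*n)) := by ring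
        _ = S.side * 2 ^ (N * (n+1)) := by rw [hexp]
        _ ≤ Q.side := hside
    calc W w S ≤ W w R / 2 := hstep
      _ = 2⁻¹ * W w R := by rw [div_eq_mul_inv, mul_comm]
      _ ≤ 2⁻¹ * ((2:ℝ≥0∞)⁻¹ ^ n * W w Q) := mul_le_mul_right hih _
      _ = (2:ℝ≥0∞)⁻¹ ^ (n+1) * W w Q := by rw [pow_succ]; ring

lemma lavg_rpow_eq (R : Cube d) {r : ℝ} (hr : 0 < r) (f : Euc d → ℝ) :
    ENNReal.ofReal (R.vol ^ (1/r)) * R.lavg (ENNReal.ofReal r) f =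
      (∫⁻ x in R.toSet, ENNReal.ofReal |f x| ^ r) ^ (1/r) := by
  rw [Cube.lavg, if_neg ENNReal.ofReal_ne_top, ENNReal.toReal_ofReal hr.le]
  set I := ∫⁻ x in R.toSet, ENNReal.ofReal |f x| ^ r
  set v := ENNReal.ofReal R.vol with hv
  have hv0 : v ≠ 0 := (ENNReal.ofReal_pos.mpr (vol_pos R)).ne'
  have hvt : v ≠ ⊤ := ENNReal.ofReal_ne_top
  rw [← ENNReal.ofReal_rpow_of_pos (vol_pos R), ← ENNReal.mul_rpow_of_nonneg _ _
    (by positivity : (0:ℝ) ≤ 1/r), ENNReal.mul_div_cancel hv0 hvt]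

/-- scalar core inequality -/
lemma scalar_core {q η : ℝ} (hq : 1 ≤ q) (hη : 0 < η) (N m : ℕ)
    (hNη : (N:ℝ) * η * (2 * q) = 1)
    {sR sQ : ℝ} (hsR : 0 < sR) (hle : sR ≤ sQ) (hcap : sQ ≤ sR * 2 ^ (N*(m+1))) :
    sR ^ (-η) * (((2:ℝ)⁻¹ ^ m) ^ (1/q)) ≤ 2 * sQ ^ (-η) := by
  have hq0 : (0:ℝ) < q := lt_of_lt_of_le one_pos hq
  have hsQ : (0:ℝ) < sQ := lt_of_lt_of_le hsR hle
  have hc : ((2:ℝ)⁻¹ ^ m) ^ (1/q) = 2 ^ (-(m:ℝ) * (1/q)) := by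
    rw [← Real.rpow_neg_one (2:ℝ), ← Real.rpow_natCast ((2:ℝ) ^ (-1:ℝ)) m,
      ← Real.rpow_mul (by norm_num), ← Real.rpow_mul (by norm_num)]
    norm_num
  have hpow : ((2:ℝ) ^ (N*(m+1))) ^ η = 2 ^ ((N*(m+1):ℕ) * η) := by
    rw [← Real.rpow_natCast (2:ℝ) (N*(m+1)), ← Real.rpow_mul (by norm_num)]
  have h1 : sQ ^ η ≤ sR ^ η * 2 ^ (((N*(m+1):ℕ)) * η) := by
    calc sQ ^ η ≤ (sR * 2 ^ (N*(m+1))) ^ η :=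
          Real.rpow_le_rpow hsQ.le hcap hη.le
      _ = sR ^ η * ((2:ℝ) ^ (N*(m+1))) ^ η := Real.mul_rpow hsR.le (by positivity)
      _ = _ := by rw [hpow]
  have hexp : ((N*(m+1):ℕ):ℝ) * η + (-(m:ℝ) * (1/q)) ≤ 1 := by
    push_cast
    have h2 : ((N:ℝ) * ((m:ℝ)+1)) * η * (2*q) = (m:ℝ) + 1 := by
      nlinarith [hNη]
    rw [div_eq_mul_inv]
    have hqi : q * q⁻¹ = 1 := mul_inv_cancel₀ hq0.ne'
    nlinarith [h2, hqi, Nat.cast_nonneg (α := ℝ) m]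
  rw [Real.rpow_neg hsR.le, Real.rpow_neg hsQ.le, hc]
  rw [inv_mul_eq_div, ← div_eq_mul_inv, div_le_div_iff₀ (by positivity) (by positivity)]
  calc 2 ^ (-(m:ℝ) * (1/q)) * sQ ^ η
      ≤ 2 ^ (-(m:ℝ) * (1/q)) * (sR ^ η * 2 ^ (((N*(m+1):ℕ)) * η)) := by
        apply mul_le_mul_of_nonneg_left h1 (by positivity)
    _ = sR ^ η * 2 ^ (((N*(m+1):ℕ):ℝ) * η + (-(m:ℝ) * (1/q))) := by
        rw [Real.rpow_add (by norm_num)]; ring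
    _ ≤ sR ^ η * 2 ^ (1:ℝ) := by
        apply mul_le_mul_of_nonneg_left _ (by positivity)
        exact Real.rpow_le_rpow_of_exponent_le (by norm_num) hexp
    _ = 2 * sR ^ η := by rw [Real.rpow_one]; ring

end CubeAux
open CubeAux

/-- If `α = 1/q + 1/p'`, `(ω,σ) ∈ A^α_{p,q}(Q)` and `ω^q ∈ A_∞(Q)`,
then there is `0 ≤ β < α` with `(ω,σ) ∈ A^β_{p,q}(Q)` and
`[ω,σ]_{A^β_{p,q}(Q)} ≤ 2 |Q|^{β-α} [ω,σ]_{A^α_{p,q}(Q)}`. -/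
theorem muck_improve (d : ℕ) (Q : Cube d) (p q : ℝ)
    (hp : 1 ≤ p) (hpq : p ≤ q)
    (ω σ : Euc d → ℝ) (hω : ∀ x, 0 < ω x) (hσ : ∀ x, 0 < σ x)
    (hωm : Measurable ω) (hσm : Measurable σ)
    (hA : muck Q p q (1 / q + (1 - 1 / p)) ω σ ≠ ⊤)
    (hAinf : ainf Q (fun x => ω x ^ q) ≠ ⊤) :
    ∃ β : ℝ, 0 ≤ β ∧ β < 1 / q + (1 - 1 / p) ∧
      muck Q p q β ω σ ≤
        2 * ENNReal.ofReal (Q.vol ^ (β - (1 / q + (1 - 1 / p)))) *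
          muck Q p q (1 / q + (1 - 1 / p)) ω σ ∧
      muck Q p q β ω σ ≠ ⊤ := by
  classical
  set α := 1 / q + (1 - 1 / p) with hαdef
  have hq1 : 1 ≤ q := hp.trans hpq
  have hq0 : 0 < q := lt_of_lt_of_le one_pos hq1
  have hp0 : 0 < p := lt_of_lt_of_le one_pos hp
  have h1p : 1 / p ≤ 1 := by rw [div_le_one hp0]; exact hp
  have hαq : 1 / q ≤ α := by rw [hαdef]; linarith
  have hα0 : 0 < α := lt_of_lt_of_le (by positivity) hαq
  rcases Nat.eq_zero_or_pos d with hd0 | hd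
  · -- degenerate zero-dimensional case
    have hvol1 : ∀ R : Cube d, R.vol = 1 := by
      intro R
      rw [Cube.vol]
      have hzz : ∀ (s : ℝ) (n : ℕ), n = 0 → s ^ n = 1 := by
        rintro s n rfl; exact pow_zero s
      exact hzz R.side d hd0
    have hmeq : muck Q p q 0 ω σ = muck Q p q α ω σ := by
      unfold muck
      congr 1
      funext R
      rw [hvol1, Real.one_rpow, Real.one_rpow]
    refine ⟨0, le_rfl, hα0, ?_, by rw [hmeq]; exact hA⟩
    rw [hmeq, hvol1 Q, Real.one_rpow, ENNReal.ofReal_one, mul_one]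
    exact le_mul_of_one_le_left zero_le one_le_two
  · -- main case `d ≥ 1`
    set w : Euc d → ℝ := fun x => ω x ^ q with hwdef
    have hw : ∀ x, 0 < w x := fun x => Real.rpow_pos_of_pos (hω x) q
    have hwm : Measurable w := hωm.pow_const q
    have hg : ∀ x, (0:ℝ) < (σ x)⁻¹ := fun x => inv_pos.mpr (hσ x)
    have hWq : ∀ R : Cube d,
        ENNReal.ofReal (R.vol ^ (1/q)) * R.lavg (ENNReal.ofReal q) ω = (W w R) ^ (1/q) := by
      intro R
      rw [lavg_rpow_eq R hq0 ω]
      congr 1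
      rw [W]
      refine lintegral_congr fun x => ?_
      rw [abs_of_pos (hω x), ENNReal.ofReal_rpow_of_pos (hω x)]
    set Gfun : Cube d → ℝ≥0∞ :=
      fun R => ENNReal.ofReal (R.vol ^ (1 - 1/p)) * R.lavg (conjE p) (fun x => (σ x)⁻¹)
      with hGdef
    have hGmono : ∀ R : Cube d, R.toSet ⊆ Q.toSet → Gfun R ≤ Gfun Q := by
      intro R hRQ
      rcases eq_or_lt_of_le hp with hp1 | hp1
      · have hp1' : p = 1 := hp1.symm
        have h0 : (1:ℝ) - 1/p = 0 := by rw [hp1']; norm_num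
        have hc : conjE p = ⊤ := by rw [conjE, if_pos hp1']
        simp only [hGdef, h0, Real.rpow_zero, ENNReal.ofReal_one, one_mul, hc,
          Cube.lavg, if_pos rfl, if_true]
        exact essSup_mono_measure
          (Measure.absolutelyContinuous_of_le (Measure.restrict_mono hRQ le_rfl))
      · have hpne : p ≠ 1 := ne_of_gt hp1
        have hr0 : 0 < p/(p-1) := div_pos hp0 (by linarith)
        have hexp : 1 - 1/p = 1/(p/(p-1)) := by field_simp
        have hc : conjE p = ENNReal.ofReal (p/(p-1)) := by rw [conjE, if_neg hpne]
        have hGR : ∀ R' : Cube d, Gfun R' =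
            (∫⁻ x in R'.toSet, ENNReal.ofReal |(σ x)⁻¹| ^ (p/(p-1))) ^ (1/(p/(p-1))) := by
          intro R'
          simp only [hGdef]
          rw [hexp, hc, lavg_rpow_eq R' hr0]
        rw [hGR R, hGR Q]
        exact ENNReal.rpow_le_rpow
          (lintegral_mono' (Measure.restrict_mono hRQ le_rfl) le_rfl) (by positivity)
    have hμ0 : volume.restrict Q.toSet ≠ 0 := by
      rw [Ne, Measure.restrict_eq_zero, volume_toSet]
      exact (ENNReal.ofReal_pos.mpr (vol_pos Q)).ne'
    have hGQ0 : Gfun Q ≠ 0 := by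
      rcases eq_or_lt_of_le hp with hp1 | hp1
      · have hp1' : p = 1 := hp1.symm
        have h0 : (1:ℝ) - 1/p = 0 := by rw [hp1']; norm_num
        have hc : conjE p = ⊤ := by rw [conjE, if_pos hp1']
        simp only [hGdef, h0, Real.rpow_zero, ENNReal.ofReal_one, one_mul, hc,
          Cube.lavg, if_pos rfl, if_true]
        intro hzero
        haveI : Filter.NeBot (ae (volume.restrict Q.toSet)) := ae_neBot.mpr hμ0
        obtain ⟨x, hx⟩ := (ae_le_essSup (f := fun x => ENNReal.ofReal |(σ x)⁻¹|)
          (μ := volume.restrict Q.toSet)).exists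
        rw [hzero, le_zero_iff, ENNReal.ofReal_eq_zero] at hx
        linarith [abs_pos.mpr (hg x).ne']
      · have hpne : p ≠ 1 := ne_of_gt hp1
        have hr0 : 0 < p/(p-1) := div_pos hp0 (by linarith)
        have hexp : 1 - 1/p = 1/(p/(p-1)) := by field_simp
        have hc : conjE p = ENNReal.ofReal (p/(p-1)) := by rw [conjE, if_neg hpne]
        have hGR : Gfun Q =
            (∫⁻ x in Q.toSet, ENNReal.ofReal |(σ x)⁻¹| ^ (p/(p-1))) ^ (1/(p/(p-1))) := by
          simp only [hGdef]
          rw [hexp, hc, lavg_rpow_eq Q hr0]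
        rw [hGR, Ne, ENNReal.rpow_eq_zero_iff]
        rintro (⟨hx0, -⟩ | ⟨-, hylt⟩)
        · have hpos : 0 < ∫⁻ x in Q.toSet, ENNReal.ofReal |(σ x)⁻¹| ^ (p/(p-1)) := by
            rw [lintegral_pos_iff_support (f := fun x => ENNReal.ofReal |(σ x)⁻¹| ^ (p/(p-1))) ((hσm.inv.abs.ennreal_ofReal).pow_const _)]
            have hsupp : (Function.support fun x =>
                ENNReal.ofReal |(σ x)⁻¹| ^ (p/(p-1))) = Set.univ := by
              ext x
              simp only [Function.mem_support, Set.mem_univ, iff_true]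
              exact (ENNReal.rpow_pos (ENNReal.ofReal_pos.mpr
                (abs_pos.mpr (hg x).ne')) ENNReal.ofReal_ne_top).ne'
            rw [hsupp, Measure.restrict_apply_univ, volume_toSet]
            exact ENNReal.ofReal_pos.mpr (vol_pos Q)
          exact hpos.ne' hx0
        · linarith [one_div_pos.mpr hr0]
    have hsplitγ : ∀ (γ : ℝ) (R : Cube d),
        ENNReal.ofReal (R.vol ^ γ) * R.lavg (ENNReal.ofReal q) ω *
          R.lavg (conjE p) (fun x => (σ x)⁻¹)
        = ENNReal.ofReal (R.vol ^ (γ - α)) * (W w R) ^ (1/q) * Gfun R := by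
      intro γ R
      have hvolR := vol_pos R
      have hv : ENNReal.ofReal (R.vol ^ γ) = ENNReal.ofReal (R.vol ^ (γ - α)) *
          ENNReal.ofReal (R.vol ^ (1/q)) * ENNReal.ofReal (R.vol ^ (1 - 1/p)) := by
        rw [← ENNReal.ofReal_mul (Real.rpow_nonneg hvolR.le _),
          ← ENNReal.ofReal_mul (mul_nonneg (Real.rpow_nonneg hvolR.le _)
            (Real.rpow_nonneg hvolR.le _)),
          ← Real.rpow_add hvolR, ← Real.rpow_add hvolR]
        congr 1
        rw [hαdef]; ring
      rw [hv]
      simp only [hGdef]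
      rw [← hWq R]
      ring
    have htermQ : ENNReal.ofReal (Q.vol ^ α) * Q.lavg (ENNReal.ofReal q) ω *
        Q.lavg (conjE p) (fun x => (σ x)⁻¹) ≤ muck Q p q α ω σ := by
      rw [muck]
      exact le_iSup (fun R : {R : Cube d // R.toSet ⊆ Q.toSet} =>
        ENNReal.ofReal (R.1.vol ^ α) * R.1.lavg (ENNReal.ofReal q) ω *
          R.1.lavg (conjE p) fun x => (σ x)⁻¹) ⟨Q, subset_rfl⟩
    have hQid : ENNReal.ofReal (Q.vol ^ α) * Q.lavg (ENNReal.ofReal q) ω *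
        Q.lavg (conjE p) (fun x => (σ x)⁻¹) = (W w Q) ^ (1/q) * Gfun Q := by
      rw [hsplitγ α Q, sub_self, Real.rpow_zero, ENNReal.ofReal_one, one_mul]
    have hQle : (W w Q) ^ (1/q) * Gfun Q ≤ muck Q p q α ω σ := hQid ▸ htermQ
    have hWQt : W w Q ≠ ⊤ := by
      intro htop
      have h1 : (W w Q) ^ (1/q) = ⊤ := by
        rw [htop]; exact ENNReal.top_rpow_of_pos (by positivity)
      have h2 : (W w Q) ^ (1/q) * Gfun Q = ⊤ := by
        rw [h1]; exact ENNReal.top_mul hGQ0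
      exact hA (top_le_iff.mp (h2 ▸ hQle))
    set A := ainf Q w with hAdef
    set N : ℕ := ⌈4 * A.toReal⌉₊ + 1 with hNdef
    have hN : 0 < N := Nat.succ_pos _
    have hAle : A ≤ (N:ℝ≥0∞)/4 := by
      have h1 : 4 * A.toReal ≤ (⌈4*A.toReal⌉₊ : ℝ) := Nat.le_ceil _
      have h2 : A.toReal ≤ (N:ℝ)/4 := by rw [hNdef]; push_cast; linarith
      calc A = ENNReal.ofReal A.toReal := (ENNReal.ofReal_toReal hAinf).symm
        _ ≤ ENNReal.ofReal ((N:ℝ)/4) := ENNReal.ofReal_le_ofReal h2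
        _ = (N:ℝ≥0∞)/4 := by
            rw [ENNReal.ofReal_div_of_pos (by norm_num), ENNReal.ofReal_natCast]
            norm_num
    have hd1 : (1:ℝ) ≤ (d:ℝ) := by exact_mod_cast hd
    have hN1 : (1:ℝ) ≤ (N:ℝ) := by exact_mod_cast hN
    have hNne : ((N:ℝ)) ≠ 0 := by positivity
    have hdne : ((d:ℝ)) ≠ 0 := by positivity
    set ε : ℝ := 1/(2 * (N:ℝ) * (d:ℝ) * q) with hεdef
    have hεpos : 0 < ε := by rw [hεdef]; positivity
    have hεle : ε ≤ 1/(2*q) := by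
      rw [hεdef]
      apply one_div_le_one_div_of_le (by positivity)
      have hNd : (1:ℝ) ≤ (N:ℝ) * d := by nlinarith
      nlinarith [mul_le_mul_of_nonneg_right hNd hq0.le]
    have hβ0 : 0 ≤ α - ε := by
      have h12 : 1/(2*q) ≤ 1/q := by
        apply one_div_le_one_div_of_le hq0; linarith
      exact sub_nonneg.mpr (hεle.trans (h12.trans hαq))
    have hNη : (N:ℝ) * ((d:ℝ)*ε) * (2*q) = 1 := by
      rw [hεdef]; field_simp
    have hηpos : 0 < (d:ℝ)*ε := by positivity
    have hcore : ∀ R : Cube d, R.toSet ⊆ Q.toSet →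
        ENNReal.ofReal (R.vol ^ (-ε)) * (W w R) ^ (1/q) ≤
          2 * ENNReal.ofReal (Q.vol ^ (-ε)) * (W w Q) ^ (1/q) := by
      intro R hRQ
      have hsR := R.side_pos
      have hsle : R.side ≤ Q.side := side_le_of_subset hd hRQ
      set P : ℕ → Prop := fun m => R.side * 2^(N*m) ≤ Q.side with hPdef
      have hP0 : P 0 := by
        simp only [hPdef, Nat.mul_zero, pow_zero, mul_one]
        exact hsle
      have hbound : ∀ m, P m → m ≤ ⌈Q.side/R.side⌉₊ := by
        intro m hm
        have h2 : (m:ℝ) < 2^(N*m) := by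
          calc (m:ℝ) < 2^m := by exact_mod_cast Nat.lt_two_pow_self (n := m)
            _ ≤ 2^(N*m) := by
                apply pow_le_pow_right₀ one_le_two
                exact Nat.le_mul_of_pos_left m hN
        have h3 : (2:ℝ)^(N*m) ≤ Q.side / R.side := by
          rw [le_div_iff₀ hsR]
          calc (2:ℝ)^(N*m) * R.side = R.side * 2^(N*m) := by ring
            _ ≤ Q.side := hm
        have h4 : (m:ℝ) ≤ (⌈Q.side/R.side⌉₊ : ℝ) :=
          le_trans (le_of_lt (lt_of_lt_of_le h2 h3)) (Nat.le_ceil _)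
        exact_mod_cast h4
      set m := Nat.findGreatest P ⌈Q.side/R.side⌉₊ with hmdef
      have hPm : P m := Nat.findGreatest_spec (Nat.zero_le _) hP0
      have hPm1 : ¬ P (m+1) := by
        intro hcon
        exact Nat.findGreatest_is_greatest (Nat.lt_succ_self m) (hbound _ hcon) hcon
      have hdecay : W w R ≤ (2:ℝ≥0∞)⁻¹ ^ m * W w Q :=
        decay hw hwm hd hWQt hN hAle m R hRQ hPm
      have hlift : (W w R)^(1/q) ≤ ENNReal.ofReal (((2:ℝ)⁻¹^m)^(1/q)) * (W w Q)^(1/q) := by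
        have h1 : (W w R)^(1/q) ≤ ((2:ℝ≥0∞)⁻¹ ^ m * W w Q)^(1/q) :=
          ENNReal.rpow_le_rpow hdecay (by positivity)
        rw [ENNReal.mul_rpow_of_nonneg _ _ (by positivity)] at h1
        have h2 : ((2:ℝ≥0∞)⁻¹ ^ m : ℝ≥0∞) = ENNReal.ofReal ((2:ℝ)⁻¹ ^ m) := by
          rw [ENNReal.ofReal_pow (by norm_num), ENNReal.ofReal_inv_of_pos (by norm_num),
            ENNReal.ofReal_ofNat]
        rw [h2, ENNReal.ofReal_rpow_of_pos (by positivity)] at h1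
        exact h1
      have hvolrw : ∀ R' : Cube d, R'.vol ^ (-ε) = R'.side ^ (-((d:ℝ)*ε)) := by
        intro R'
        rw [Cube.vol, ← Real.rpow_natCast R'.side d, ← Real.rpow_mul R'.side_pos.le]
        congr 1
        ring
      have hcap : Q.side ≤ R.side * 2 ^ (N*(m+1)) := by
        have := not_le.mp hPm1
        linarith [this]
      have hscal : R.side ^ (-((d:ℝ)*ε)) * (((2:ℝ)⁻¹^m)^(1/q)) ≤
          2 * Q.side ^ (-((d:ℝ)*ε)) :=
        scalar_core hq1 hηpos N m hNη hsR hsle hcap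
      calc ENNReal.ofReal (R.vol ^ (-ε)) * (W w R)^(1/q)
          ≤ ENNReal.ofReal (R.vol ^ (-ε)) *
              (ENNReal.ofReal (((2:ℝ)⁻¹^m)^(1/q)) * (W w Q)^(1/q)) :=
            mul_le_mul_right hlift _
        _ = ENNReal.ofReal (R.vol ^ (-ε) * ((2:ℝ)⁻¹^m)^(1/q)) * (W w Q)^(1/q) := by
            rw [ENNReal.ofReal_mul (Real.rpow_nonneg (vol_pos R).le _), mul_assoc]
        _ ≤ ENNReal.ofReal (2 * Q.vol ^ (-ε)) * (W w Q)^(1/q) := by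
            apply mul_le_mul_left
            apply ENNReal.ofReal_le_ofReal
            rw [hvolrw R, hvolrw Q]
            exact hscal
        _ = 2 * ENNReal.ofReal (Q.vol ^ (-ε)) * (W w Q)^(1/q) := by
            rw [ENNReal.ofReal_mul (by norm_num), ENNReal.ofReal_ofNat]
    have hexpc : α - ε - α = -ε := by ring
    have hfinal : muck Q p q (α - ε) ω σ ≤
        2 * ENNReal.ofReal (Q.vol ^ (α - ε - α)) * muck Q p q α ω σ := by
      rw [muck]
      apply iSup_le
      rintro ⟨R, hRQ⟩
      calc ENNReal.ofReal (R.vol ^ (α - ε)) * R.lavg (ENNReal.ofReal q) ω *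
            R.lavg (conjE p) (fun x => (σ x)⁻¹)
          = ENNReal.ofReal (R.vol ^ (-ε)) * (W w R) ^ (1/q) * Gfun R := by
            rw [hsplitγ (α - ε) R, hexpc]
        _ ≤ ENNReal.ofReal (R.vol ^ (-ε)) * (W w R) ^ (1/q) * Gfun Q :=
            mul_le_mul_right (hGmono R hRQ) _
        _ ≤ 2 * ENNReal.ofReal (Q.vol ^ (-ε)) * (W w Q) ^ (1/q) * Gfun Q :=
            mul_le_mul_left (hcore R hRQ) _
        _ = 2 * ENNReal.ofReal (Q.vol ^ (α - ε - α)) * ((W w Q) ^ (1/q) * Gfun Q) := by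
            rw [hexpc]; ring
        _ ≤ 2 * ENNReal.ofReal (Q.vol ^ (α - ε - α)) * muck Q p q α ω σ :=
            mul_le_mul_right hQle _
    exact ⟨α - ε, hβ0, by linarith, hfinal, ne_top_of_le_ne_top
      (ENNReal.mul_ne_top (ENNReal.mul_ne_top ENNReal.ofNat_ne_top ENNReal.ofReal_ne_top) hA)
      hfinal⟩
end
end

section
/- Let $Q \subseteq \mathbb{R}^d$ be a cube and $f \in L^1(Q)$. Then for almost every $x \in Q$, $|f(x) - \langle f\rangle_Q| \le C_d \sum_{R \in \mathcal{D}(Q)} \langle |f - \langle f\rangle_R| \rangle_R\, \mathbf{1}_R(x)$, where $C_d$ depends only on the dimension $d$ (one may take $C_d = 2^d$). -/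
open MeasureTheory
open scoped ENNReal NNReal

noncomputable section

namespace DyDom
open Set Metric Cube Filter
variable {d : ℕ}

/-- lower corner -/
def lo (R : Cube d) (i : Fin d) : ℝ := R.center i - R.side / 2

lemma mem_toSet_iff {R : Cube d} {x : Euc d} :
    x ∈ R.toSet ↔ ∀ i, lo R i ≤ x i ∧ x i < lo R i + R.side := by
  unfold Cube.toSet lo
  constructor <;> intro h i <;> have := h i <;> constructor <;> [skip; skip; skip; skip] <;> linarith [(h i).1, (h i).2]

lemma vol_pos (R : Cube d) : 0 < R.vol := pow_pos R.side_pos d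

/-- closed cube -/
def cl (R : Cube d) : Set (Euc d) := {x | ∀ i, lo R i ≤ x i ∧ x i ≤ lo R i + R.side}

lemma toSet_subset_cl (R : Cube d) : R.toSet ⊆ cl R := by
  intro x hx i
  rcases mem_toSet_iff.1 hx i with ⟨h1, h2⟩
  exact ⟨h1, h2.le⟩

lemma volume_box (a b : Fin d → ℝ) :
    volume ({x : Euc d | ∀ i, a i ≤ x i ∧ x i < b i}) = ∏ i, ENNReal.ofReal (b i - a i) := by
  have h : ({x : Euc d | ∀ i, a i ≤ x i ∧ x i < b i}) =
      (MeasurableEquiv.toLp 2 (Fin d → ℝ)).symm ⁻¹' (Set.univ.pi fun i => Set.Ico (a i) (b i)) := by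
    ext x; simp [Set.mem_pi, MeasurableEquiv.coe_toLp_symm, Set.mem_Ico]
  rw [h, MeasurePreserving.measure_preimage
    (EuclideanSpace.volume_preserving_symm_measurableEquiv_toLp (Fin d))
    (MeasurableSet.univ_pi fun i => measurableSet_Ico).nullMeasurableSet]
  rw [volume_pi_pi]; simp [Real.volume_Ico]

lemma volume_boxcl (a b : Fin d → ℝ) :
    volume ({x : Euc d | ∀ i, a i ≤ x i ∧ x i ≤ b i}) = ∏ i, ENNReal.ofReal (b i - a i) := by
  have h : ({x : Euc d | ∀ i, a i ≤ x i ∧ x i ≤ b i}) =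
      (MeasurableEquiv.toLp 2 (Fin d → ℝ)).symm ⁻¹' (Set.univ.pi fun i => Set.Icc (a i) (b i)) := by
    ext x; simp only [Set.mem_setOf_eq, Set.mem_preimage, Set.mem_pi, Set.mem_univ, Set.mem_Icc,
      forall_true_left, MeasurableEquiv.coe_mk, Equiv.coe_fn_mk]
    rfl
  rw [h, MeasurePreserving.measure_preimage
    (EuclideanSpace.volume_preserving_symm_measurableEquiv_toLp (Fin d))
    (MeasurableSet.univ_pi fun i => measurableSet_Icc).nullMeasurableSet]
  rw [volume_pi_pi]; simp [Real.volume_Icc]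

lemma volume_toSet (R : Cube d) : volume R.toSet = ENNReal.ofReal R.vol := by
  have h : R.toSet = {x : Euc d | ∀ i, lo R i ≤ x i ∧ x i < lo R i + R.side} := by
    ext x; exact mem_toSet_iff
  rw [h, volume_box]
  simp only [add_sub_cancel_left]
  rw [Finset.prod_const, ← ENNReal.ofReal_pow R.side_pos.le]
  simp [Cube.vol]

lemma volume_cl (R : Cube d) : volume (cl R) = ENNReal.ofReal R.vol := by
  have h : cl R = {x : Euc d | ∀ i, lo R i ≤ x i ∧ x i ≤ lo R i + R.side} := rfl
  rw [h, volume_boxcl]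
  simp only [add_sub_cancel_left]
  rw [Finset.prod_const, ← ENNReal.ofReal_pow R.side_pos.le]
  simp [Cube.vol]

lemma measurableSet_toSet (R : Cube d) : MeasurableSet R.toSet := by
  have h : R.toSet = ⋂ i, ((fun x : Euc d => x i) ⁻¹' Set.Ico (lo R i) (lo R i + R.side)) := by
    ext x; simp [mem_toSet_iff, Set.mem_Ico]
  rw [h]
  exact MeasurableSet.iInter fun i => (measurableSet_Ico).preimage
    ((measurable_pi_apply i).comp (MeasurableEquiv.toLp 2 (Fin d → ℝ)).symm.measurable)

lemma measurableSet_cl (R : Cube d) : MeasurableSet (cl R) := by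
  have h : cl R = ⋂ i, ((fun x : Euc d => x i) ⁻¹' Set.Icc (lo R i) (lo R i + R.side)) := by
    ext x; simp only [cl, Set.mem_setOf_eq, Set.mem_iInter, Set.mem_preimage, Set.mem_Icc]
  rw [h]
  exact MeasurableSet.iInter fun i => (measurableSet_Icc).preimage
    ((measurable_pi_apply i).comp (MeasurableEquiv.toLp 2 (Fin d → ℝ)).symm.measurable)

lemma toSet_ae_eq_cl (R : Cube d) : R.toSet =ᵐ[volume] cl R := by
  rw [MeasureTheory.ae_eq_set]
  constructor
  · exact measure_mono_null (Set.diff_subset_diff_left (toSet_subset_cl R)) (by simp)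
  · have := measure_diff (toSet_subset_cl R) (measurableSet_toSet R).nullMeasurableSet
      (by rw [volume_toSet]; exact ENNReal.ofReal_ne_top)
    rw [this, volume_cl, volume_toSet, tsub_self]

section geo
open Set Metric Cube Filter
variable {d : ℕ} (Q : Cube d)

lemma lo_dyadicSub (j : ℕ) (k : Fin d → ℕ) (i : Fin d) :
    lo (Q.dyadicSub j k) i = lo Q i + (k i : ℝ) * (Q.side / 2 ^ j) := by
  simp only [lo, Cube.dyadicSub, PiLp.toLp_apply]
  ring

lemma side_dyadicSub (j : ℕ) (k : Fin d → ℕ) : (Q.dyadicSub j k).side = Q.side / 2 ^ j := rfl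

lemma mem_dyadicSub_iff {j : ℕ} {k : Fin d → ℕ} {x : Euc d} :
    x ∈ (Q.dyadicSub j k).toSet ↔ ∀ i,
      lo Q i + (k i : ℝ) * (Q.side / 2 ^ j) ≤ x i ∧
      x i < lo Q i + ((k i : ℝ) + 1) * (Q.side / 2 ^ j) := by
  rw [mem_toSet_iff]
  constructor <;> intro h i <;> rcases h i with ⟨h1, h2⟩ <;>
    rw [lo_dyadicSub, side_dyadicSub] at * <;> constructor <;> linarith

/-- the index of the level-`j` dyadic cube containing `x` -/
def idx (j : ℕ) (x : Euc d) (i : Fin d) : ℕ := (⌊(x i - lo Q i) / (Q.side / 2 ^ j)⌋).toNat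

variable {Q}

lemma hstep_pos (j : ℕ) : 0 < Q.side / 2 ^ j := div_pos Q.side_pos (by positivity)

lemma idx_floor {j : ℕ} {x : Euc d} (hx : x ∈ Q.toSet) (i : Fin d) :
    (idx Q j x i : ℝ) = ⌊(x i - lo Q i) / (Q.side / 2 ^ j)⌋ ∧
      0 ≤ ⌊(x i - lo Q i) / (Q.side / 2 ^ j)⌋ := by
  have h0 : (0:ℝ) ≤ (x i - lo Q i) / (Q.side / 2 ^ j) :=
    div_nonneg (by linarith [(mem_toSet_iff.1 hx i).1]) (hstep_pos j).le
  have hfl : 0 ≤ ⌊(x i - lo Q i) / (Q.side / 2 ^ j)⌋ := Int.floor_nonneg.2 h0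
  refine ⟨?_, hfl⟩
  simp only [idx]
  rw [← Int.cast_natCast, Int.toNat_of_nonneg hfl]

lemma idx_lt {j : ℕ} {x : Euc d} (hx : x ∈ Q.toSet) (i : Fin d) : idx Q j x i < 2 ^ j := by
  have h2 := (mem_toSet_iff.1 hx i).2
  have hs := hstep_pos (Q := Q) j
  have hlt : (x i - lo Q i) / (Q.side / 2 ^ j) < 2 ^ j := by
    rw [div_lt_iff₀ hs]
    have : (2:ℝ) ^ j * (Q.side / 2 ^ j) = Q.side := by field_simp
    rw [this]; linarith
  have h : ⌊(x i - lo Q i) / (Q.side / 2 ^ j)⌋ < ((2 ^ j : ℕ) : ℤ) := by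
    apply Int.floor_lt.2; push_cast; exact hlt
  exact (Int.toNat_lt' (by positivity)).2 h

lemma mem_dyadicSub_idx {j : ℕ} {x : Euc d} (hx : x ∈ Q.toSet) :
    x ∈ (Q.dyadicSub j (idx Q j x)).toSet := by
  rw [mem_dyadicSub_iff]
  intro i
  obtain ⟨hiv, _⟩ := idx_floor (j := j) hx i
  have hs := hstep_pos (Q := Q) j
  set t := (x i - lo Q i) / (Q.side / 2 ^ j) with ht
  have h1 : (⌊t⌋ : ℝ) ≤ t := Int.floor_le t
  have h2 : t < ⌊t⌋ + 1 := Int.lt_floor_add_one t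
  have hxi : t * (Q.side / 2 ^ j) = x i - lo Q i := div_mul_cancel₀ _ hs.ne'
  rw [hiv]
  constructor
  · nlinarith
  · nlinarith

lemma dyadicSub_idx_succ_subset {j : ℕ} {x : Euc d} (hx : x ∈ Q.toSet) :
    (Q.dyadicSub (j+1) (idx Q (j+1) x)).toSet ⊆ (Q.dyadicSub j (idx Q j x)).toSet := by
  intro y hy
  rw [mem_dyadicSub_iff] at hy ⊢
  intro i
  obtain ⟨hm, hm0⟩ := idx_floor (j := j+1) hx i
  obtain ⟨hq, hq0⟩ := idx_floor (j := j) hx i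
  set m := ⌊(x i - lo Q i) / (Q.side / 2 ^ (j+1))⌋ with hmdef
  set q := ⌊(x i - lo Q i) / (Q.side / 2 ^ j)⌋ with hqdef
  have h2 : (x i - lo Q i) / (Q.side / 2 ^ j) = ((x i - lo Q i) / (Q.side / 2 ^ (j+1))) / 2 := by
    rw [div_div]
    congr 1
    field_simp
    ring
  set t := (x i - lo Q i) / (Q.side / 2 ^ (j+1)) with htdef
  have hf1 : (m : ℝ) ≤ t := Int.floor_le t
  have hf2 : t < (m : ℝ) + 1 := Int.lt_floor_add_one t
  have hg1 : (q : ℝ) ≤ t / 2 := by rw [hqdef, h2]; exact Int.floor_le _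
  have hg2 : t / 2 < (q : ℝ) + 1 := by rw [hqdef, h2]; exact Int.lt_floor_add_one _
  have e1' : (2 * q : ℝ) < (m : ℝ) + 1 := by linarith
  have e2' : (m : ℝ) < 2 * (q : ℝ) + 2 := by linarith
  have i1 : 2 * q < m + 1 := by exact_mod_cast e1'
  have i2 : m < 2 * q + 2 := by exact_mod_cast e2'
  have hq1 : 2 * q ≤ m ∧ m + 1 ≤ 2 * q + 2 := by omega
  rcases hy i with ⟨hy1, hy2⟩
  have hs := hstep_pos (Q := Q) (j+1)
  have hh : Q.side / 2 ^ j = 2 * (Q.side / 2 ^ (j+1)) := by field_simp; ring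
  rw [hm] at hy1 hy2
  rw [hq, hh]
  have e1 : (2 * q : ℝ) ≤ (m : ℝ) := by exact_mod_cast hq1.1
  have e2 : ((m : ℝ) + 1) ≤ 2 * q + 2 := by exact_mod_cast hq1.2
  constructor
  · nlinarith
  · nlinarith

lemma dyadicSub_zero_idx {x : Euc d} (hx : x ∈ Q.toSet) :
    Q.dyadicSub 0 (idx Q 0 x) = Q := by
  have hidx : ∀ i, idx Q 0 x i = 0 := by
    intro i; have := idx_lt (j := 0) hx i; omega
  obtain ⟨c, s, hs⟩ := Q
  simp only [Cube.dyadicSub, Cube.mk.injEq]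
  constructor
  · ext i
    simp only [PiLp.toLp_apply]
    rw [hidx i]
    push_cast
    simp
    ring
  · simp

lemma dyadicSub_idx_subset_base {x : Euc d} (hx : x ∈ Q.toSet) (j : ℕ) :
    (Q.dyadicSub j (idx Q j x)).toSet ⊆ Q.toSet := by
  induction j with
  | zero => rw [dyadicSub_zero_idx hx]
  | succ n ih => exact (dyadicSub_idx_succ_subset hx).trans ih

lemma vol_dyadicSub (j : ℕ) (k : Fin d → ℕ) :
    (Q.dyadicSub j k).vol = Q.vol / (2:ℝ) ^ (j * d) := by
  simp only [Cube.vol, side_dyadicSub, div_pow, ← pow_mul]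

lemma vol_dyadicSub_succ (j : ℕ) (k k' : Fin d → ℕ) :
    (Q.dyadicSub j k).vol = 2 ^ d * (Q.dyadicSub (j+1) k').vol := by
  rw [vol_dyadicSub, vol_dyadicSub, add_mul, one_mul, pow_add]
  field_simp

end geo

section ana
open Set Metric Cube Filter
variable {d : ℕ}

lemma integrableOn_sub_const {R : Cube d} {f : Euc d → ℝ} (hf : MeasureTheory.IntegrableOn f R.toSet)
    (c : ℝ) : MeasureTheory.IntegrableOn (fun y => f y - c) R.toSet := by
  exact hf.sub ((MeasureTheory.integrableOn_const_iff).2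
    (Or.inr (by rw [volume_toSet]; exact ENNReal.ofReal_lt_top)))

lemma elavg_abs_sub (R : Cube d) {f : Euc d → ℝ} (hf : MeasureTheory.IntegrableOn f R.toSet) (c : ℝ) :
    R.elavg (fun y => ENNReal.ofReal |f y - c|) =
      ENNReal.ofReal ((∫ y in R.toSet, |f y - c|) / R.vol) := by
  have hint : MeasureTheory.Integrable (fun y => |f y - c|) (volume.restrict R.toSet) :=
    (integrableOn_sub_const hf c).abs
  have h1 : ∫⁻ y in R.toSet, ENNReal.ofReal |f y - c| =
      ENNReal.ofReal (∫ y in R.toSet, |f y - c|) :=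
    (MeasureTheory.ofReal_integral_eq_lintegral_ofReal hint
      (Filter.Eventually.of_forall fun y => abs_nonneg _)).symm
  rw [Cube.elavg, h1, ← ENNReal.ofReal_div_of_pos (vol_pos R)]

lemma abs_avg_sub_avg_le {R R' : Cube d} {f : Euc d → ℝ}
    (hsub : R'.toSet ⊆ R.toSet) (hvol : R.vol = 2 ^ d * R'.vol)
    (hf : MeasureTheory.IntegrableOn f R.toSet) :
    |R'.avg f - R.avg f| ≤ 2 ^ d * ((∫ y in R.toSet, |f y - R.avg f|) / R.vol) := by
  set c := R.avg f with hc
  have hf' : MeasureTheory.IntegrableOn f R'.toSet := hf.mono_set hsub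
  have hvolR' : volume R'.toSet = ENNReal.ofReal R'.vol := volume_toSet R'
  have hconst : ∫ _ in R'.toSet, c = R'.vol * c := by
    rw [MeasureTheory.setIntegral_const, measureReal_def, hvolR', ENNReal.toReal_ofReal (vol_pos R').le,
      smul_eq_mul]
  have key : R'.avg f - c = R'.vol⁻¹ * ∫ y in R'.toSet, (f y - c) := by
    rw [MeasureTheory.integral_sub hf' ((MeasureTheory.integrableOn_const_iff).2
      (Or.inr (by rw [hvolR']; exact ENNReal.ofReal_lt_top))), hconst, Cube.avg, mul_sub,
      ← mul_assoc, inv_mul_cancel₀ (vol_pos R').ne', one_mul]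
  have habs : |R'.avg f - c| ≤ R'.vol⁻¹ * ∫ y in R'.toSet, |f y - c| := by
    have h := MeasureTheory.norm_integral_le_integral_norm (μ := volume.restrict R'.toSet)
      (fun y => f y - c)
    simp only [Real.norm_eq_abs] at h
    rw [key, abs_mul, abs_of_nonneg (inv_nonneg.2 (vol_pos R').le)]
    exact mul_le_mul_of_nonneg_left h (inv_nonneg.2 (vol_pos R').le)
  have hmono : ∫ y in R'.toSet, |f y - c| ≤ ∫ y in R.toSet, |f y - c| :=
    MeasureTheory.setIntegral_mono_set (integrableOn_sub_const hf c).abs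
      (Filter.Eventually.of_forall fun y => abs_nonneg _) (HasSubset.Subset.eventuallyLE hsub)
  have hR'pos := vol_pos R'
  have hRpos := vol_pos R
  have h2 : R'.vol⁻¹ = 2 ^ d * R.vol⁻¹ := by
    rw [hvol]
    field_simp
  calc |R'.avg f - c| ≤ R'.vol⁻¹ * ∫ y in R'.toSet, |f y - c| := habs
    _ ≤ R'.vol⁻¹ * ∫ y in R.toSet, |f y - c| := by
        exact mul_le_mul_of_nonneg_left hmono (inv_nonneg.2 hR'pos.le)
    _ = 2 ^ d * ((∫ y in R.toSet, |f y - c|) / R.vol) := by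
        rw [h2]; ring

lemma step {R R' : Cube d} {f : Euc d → ℝ}
    (hsub : R'.toSet ⊆ R.toSet) (hvol : R.vol = 2 ^ d * R'.vol)
    (hf : MeasureTheory.IntegrableOn f R.toSet) :
    ENNReal.ofReal |R'.avg f - R.avg f| ≤
      2 ^ d * R.elavg (fun y => ENNReal.ofReal |f y - R.avg f|) := by
  rw [elavg_abs_sub R hf]
  have h2 : (2:ℝ≥0∞) ^ d = ENNReal.ofReal ((2:ℝ) ^ d) := by
    rw [ENNReal.ofReal_pow (by norm_num)]
    norm_num
  rw [h2, ← ENNReal.ofReal_mul (by positivity)]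
  exact ENNReal.ofReal_le_ofReal (abs_avg_sub_avg_le hsub hvol hf)

end ana

section vit
open Set Metric Cube Filter
variable {d : ℕ}

lemma abs_coord_le_dist (x y : Euc d) (i : Fin d) : |x i - y i| ≤ dist x y := by
  rw [EuclideanSpace.dist_eq]
  have h1 : |x i - y i| = Real.sqrt (dist (x i) (y i) ^ 2) := by
    rw [Real.dist_eq, Real.sqrt_sq_eq_abs, abs_abs]
  rw [h1]
  apply Real.sqrt_le_sqrt
  exact Finset.single_le_sum (fun j _ => sq_nonneg (dist (x j) (y j))) (Finset.mem_univ i)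

lemma cl_subset_closedBall {R : Cube d} {x : Euc d} (hx : x ∈ cl R) :
    cl R ⊆ closedBall x (R.side * Real.sqrt d) := by
  intro y hy
  rw [mem_closedBall, EuclideanSpace.dist_eq]
  have hbd : ∀ i, dist (y i) (x i) ^ 2 ≤ R.side ^ 2 := by
    intro i
    have h1 := (hx i).1; have h2 := (hx i).2
    have h3 := (hy i).1; have h4 := (hy i).2
    rw [Real.dist_eq]
    have hle : |y i - x i| ≤ R.side := by rw [abs_le]; constructor <;> linarith
    exact pow_le_pow_left₀ (abs_nonneg _) hle 2
  calc Real.sqrt (∑ i, dist (y i) (x i) ^ 2) ≤ Real.sqrt (∑ _i : Fin d, R.side ^ 2) := by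
        apply Real.sqrt_le_sqrt
        exact Finset.sum_le_sum fun i _ => hbd i
    _ = R.side * Real.sqrt d := by
        rw [Finset.sum_const, Finset.card_univ, Fintype.card_fin, nsmul_eq_mul,
          Real.sqrt_mul (by positivity), Real.sqrt_sq R.side_pos.le]
        ring

lemma closedBall_subset_box (x : Euc d) (ρ : ℝ) :
    closedBall x ρ ⊆ {y : Euc d | ∀ i, x i - ρ ≤ y i ∧ y i ≤ x i + ρ} := by
  intro y hy i
  have := abs_coord_le_dist y x i
  rw [mem_closedBall] at hy
  rw [abs_le] at this
  constructor <;> [linarith [this.1]; linarith [this.2]]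

lemma volume_closedBall_le_box (x : Euc d) {ρ : ℝ} (hρ : 0 ≤ ρ) :
    volume (closedBall x ρ) ≤ ENNReal.ofReal ((2 * ρ) ^ d) := by
  calc volume (closedBall x ρ) ≤ volume {y : Euc d | ∀ i, x i - ρ ≤ y i ∧ y i ≤ x i + ρ} :=
        measure_mono (closedBall_subset_box x ρ)
    _ = ∏ _i : Fin d, ENNReal.ofReal (2 * ρ) := by
        rw [volume_boxcl]
        congr 1
        funext i
        congr 1
        ring
    _ = ENNReal.ofReal ((2 * ρ) ^ d) := by
        rw [Finset.prod_const, Finset.card_univ, Fintype.card_fin,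
          ← ENNReal.ofReal_pow (by positivity)]

/-- the doubling constant -/
def Creal (d : ℕ) : ℝ := (6 * (Real.sqrt d + 1)) ^ d

lemma Creal_nonneg (d : ℕ) : 0 ≤ Creal d := by
  unfold Creal; positivity

def CC (d : ℕ) : ℝ≥0 := (Creal d).toNNReal

lemma CC_coe (d : ℕ) : (CC d : ℝ≥0∞) = ENNReal.ofReal (Creal d) := rfl

lemma volume_doubling (x : Euc d) :
    ∃ᶠ r in nhdsWithin 0 (Set.Ioi (0:ℝ)),
      volume (closedBall x (3 * r)) ≤ (CC d : ℝ≥0∞) * volume (closedBall x r) := by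
  apply Filter.Eventually.frequently
  filter_upwards [self_mem_nhdsWithin] with r (hr : 0 < r)
  rw [MeasureTheory.Measure.addHaar_closedBall volume x (by positivity : (0:ℝ) ≤ 3 * r),
    MeasureTheory.Measure.addHaar_closedBall volume x hr.le, finrank_euclideanSpace_fin,
    CC_coe, ← mul_assoc, ← ENNReal.ofReal_mul (Creal_nonneg d)]
  apply mul_le_mul_left
  apply ENNReal.ofReal_le_ofReal
  rw [mul_pow]
  apply mul_le_mul_of_nonneg_right _ (by positivity)
  apply pow_le_pow_left₀ (by norm_num)
  nlinarith [Real.sqrt_nonneg (d:ℝ)]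
end vit

section vit2
open Set Metric Cube Filter
variable {d : ℕ}

lemma isClosed_cl (R : Cube d) : IsClosed (cl R) := by
  have h : cl R = ⋂ i, ((fun x : Euc d => x i) ⁻¹' Set.Icc (lo R i) (lo R i + R.side)) := by
    ext x; simp only [cl, Set.mem_setOf_eq, Set.mem_iInter, Set.mem_preimage, Set.mem_Icc]
  rw [h]
  exact isClosed_iInter fun i => isClosed_Icc.preimage (EuclideanSpace.proj i).continuous

lemma interior_cl_nonempty (R : Cube d) : (interior (cl R)).Nonempty := by
  have hopen : IsOpen (⋂ i, ((fun x : Euc d => x i) ⁻¹' Set.Ioo (lo R i) (lo R i + R.side))) :=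
    isOpen_iInter_of_finite fun i => isOpen_Ioo.preimage (EuclideanSpace.proj i).continuous
  have hsub : (⋂ i, ((fun x : Euc d => x i) ⁻¹' Set.Ioo (lo R i) (lo R i + R.side))) ⊆ cl R := by
    intro y hy i
    simp only [Set.mem_iInter, Set.mem_preimage, Set.mem_Ioo] at hy
    exact ⟨(hy i).1.le, (hy i).2.le⟩
  refine ⟨R.center, interior_maximal hsub hopen ?_⟩
  simp only [Set.mem_iInter, Set.mem_preimage, Set.mem_Ioo]
  intro i
  unfold lo
  constructor <;> nlinarith [R.side_pos]

lemma cl_mem_setsAt {R : Cube d} {x : Euc d} (hx : x ∈ R.toSet)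
    (hdb : ∀ x : Euc d, ∃ᶠ r in nhdsWithin 0 (Set.Ioi (0:ℝ)),
      volume (closedBall x (3 * r)) ≤ (CC d : ℝ≥0∞) * volume (closedBall x r)) :
    cl R ∈ (Vitali.vitaliFamily (volume : MeasureTheory.Measure (Euc d)) (CC d) hdb).setsAt x := by
  refine ⟨isClosed_cl R, interior_cl_nonempty R, R.side * Real.sqrt d, ?_, ?_⟩
  · exact cl_subset_closedBall (toSet_subset_cl R hx)
  · have h1 : volume (closedBall x (3 * (R.side * Real.sqrt d))) ≤
        ENNReal.ofReal ((2 * (3 * (R.side * Real.sqrt d))) ^ d) :=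
      volume_closedBall_le_box x (mul_nonneg (by norm_num)
        (mul_nonneg R.side_pos.le (Real.sqrt_nonneg _)))
    refine h1.trans ?_
    rw [volume_cl, CC_coe, ← ENNReal.ofReal_mul (Creal_nonneg d)]
    apply ENNReal.ofReal_le_ofReal
    have : (2 * (3 * (R.side * Real.sqrt d))) ^ d = (6 * Real.sqrt d) ^ d * R.side ^ d := by
      rw [← mul_pow]; ring_nf
    rw [this, Cube.vol]
    apply mul_le_mul_of_nonneg_right _ (pow_nonneg R.side_pos.le d)
    unfold Creal
    apply pow_le_pow_left₀ (by positivity)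
    nlinarith [Real.sqrt_nonneg (d:ℝ)]

lemma tendsto_cl_filterAt {Q : Cube d} {x : Euc d} (hx : x ∈ Q.toSet)
    (hdb : ∀ x : Euc d, ∃ᶠ r in nhdsWithin 0 (Set.Ioi (0:ℝ)),
      volume (closedBall x (3 * r)) ≤ (CC d : ℝ≥0∞) * volume (closedBall x r)) :
    Tendsto (fun N => cl (Q.dyadicSub N (idx Q N x))) atTop
      ((Vitali.vitaliFamily (volume : MeasureTheory.Measure (Euc d)) (CC d) hdb).filterAt x) := by
  rw [VitaliFamily.tendsto_filterAt_iff]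
  constructor
  · exact Filter.Eventually.of_forall fun N => cl_mem_setsAt (mem_dyadicSub_idx hx) hdb
  · intro ε hε
    have hlim : Tendsto (fun N : ℕ => Q.side * Real.sqrt d * (1/2) ^ N) atTop (nhds 0) := by
      rw [show (0:ℝ) = Q.side * Real.sqrt d * 0 by ring]
      exact (tendsto_pow_atTop_nhds_zero_of_lt_one (by norm_num) (by norm_num)).const_mul _
    filter_upwards [hlim.eventually (eventually_le_nhds hε)] with N hN
    have hside : (Q.dyadicSub N (idx Q N x)).side * Real.sqrt d =
        Q.side * Real.sqrt d * (1/2) ^ N := by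
      rw [side_dyadicSub]
      simp only [div_eq_mul_inv, one_mul, inv_pow]
      ring
    refine (cl_subset_closedBall (toSet_subset_cl _ (mem_dyadicSub_idx hx))).trans ?_
    apply closedBall_subset_closedBall
    rw [hside]
    exact hN

end vit2

section fin
open Set Metric Cube Filter
variable {d : ℕ}

lemma average_cl_eq {Q R : Cube d} (f : Euc d → ℝ) (hsub : R.toSet ⊆ Q.toSet) :
    ⨍ y in cl R, (Q.toSet.indicator f) y ∂volume = R.avg f := by
  rw [MeasureTheory.setAverage_eq, measureReal_def, volume_cl, ENNReal.toReal_ofReal (vol_pos R).le,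
    ← MeasureTheory.setIntegral_congr_set (toSet_ae_eq_cl R),
    MeasureTheory.setIntegral_congr_fun (measurableSet_toSet R)
      (fun y hy => Set.indicator_of_mem (hsub hy) f),
    Cube.avg, smul_eq_mul]

end fin
end DyDom

open DyDom

/-- Dyadic domination of the oscillation: for `f ∈ L¹(Q)` and
a.e. `x ∈ Q`, `|f(x) - ⟨f⟩_Q| ≤ 2^d ∑_{R ∈ 𝒟(Q)} ⟨|f - ⟨f⟩_R|⟩_R 1_R(x)`. -/
theorem dyadic_domination (d : ℕ) (Q : Cube d) (f : Euc d → ℝ)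
    (hf : IntegrableOn f Q.toSet) :
    ∀ᵐ x ∂(volume.restrict Q.toSet),
      ENNReal.ofReal |f x - Q.avg f| ≤
        2 ^ d * ∑' j : ℕ, ∑ k : Fin d → Fin (2 ^ j),
          (fun R : Cube d =>
              R.elavg (fun y => ENNReal.ofReal |f y - R.avg f|) *
                R.toSet.indicator (fun _ => (1 : ℝ≥0∞)) x)
            (Q.dyadicSub j fun i => (k i : ℕ)) := by
  
  classical
  set g : Euc d → ℝ := Q.toSet.indicator f with hgdef
  have hgint : MeasureTheory.Integrable g volume :=
    hf.integrable_indicator (measurableSet_toSet Q)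
  have hdb : ∀ x : Euc d, ∃ᶠ r in nhdsWithin 0 (Set.Ioi (0:ℝ)),
      volume (Metric.closedBall x (3 * r)) ≤ (CC d : ℝ≥0∞) * volume (Metric.closedBall x r) :=
    volume_doubling
  have hae := (Vitali.vitaliFamily (volume : MeasureTheory.Measure (Euc d))
    (CC d) hdb).ae_tendsto_average hgint.locallyIntegrable
  filter_upwards [MeasureTheory.ae_restrict_mem (measurableSet_toSet Q),
    MeasureTheory.ae_restrict_of_ae hae] with x hxQ hx
  set Rj : ℕ → Cube d := fun N => Q.dyadicSub N (idx Q N x) with hRjdef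
  have hsubQ : ∀ N, (Rj N).toSet ⊆ Q.toSet := fun N => dyadicSub_idx_subset_base hxQ N
  -- convergence of dyadic averages
  have hT : Filter.Tendsto (fun N => (Rj N).avg f) Filter.atTop (nhds (f x)) := by
    have h1 := hx.comp (tendsto_cl_filterAt hxQ hdb)
    have h2 : (fun N => ⨍ y in cl (Rj N), g y ∂volume) = fun N => (Rj N).avg f :=
      funext fun N => average_cl_eq f (hsubQ N)
    have h3 : g x = f x := Set.indicator_of_mem hxQ f
    rw [show ((fun a : Set (Euc d) => ⨍ y in a, g y ∂volume) ∘ fun N => cl (Rj N))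
        = fun N => ⨍ y in cl (Rj N), g y ∂volume from rfl, h2, h3] at h1
    exact h1
  -- abbreviation for the per-level oscillation
  set e : ℕ → ℝ≥0∞ := fun j => (Rj j).elavg (fun y => ENNReal.ofReal |f y - (Rj j).avg f|)
    with hedef
  -- telescoping bound
  have hchain : ∀ N, ENNReal.ofReal |(Rj N).avg f - Q.avg f| ≤
      ∑ j ∈ Finset.range N, 2 ^ d * e j := by
    intro N
    induction N with
    | zero =>
      have h0 : Rj 0 = Q := dyadicSub_zero_idx hxQ
      simp [h0]
    | succ N ih =>
      calc ENNReal.ofReal |(Rj (N+1)).avg f - Q.avg f|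
          ≤ ENNReal.ofReal (|(Rj (N+1)).avg f - (Rj N).avg f| + |(Rj N).avg f - Q.avg f|) :=
            ENNReal.ofReal_le_ofReal (abs_sub_le _ _ _)
        _ ≤ ENNReal.ofReal |(Rj (N+1)).avg f - (Rj N).avg f|
            + ENNReal.ofReal |(Rj N).avg f - Q.avg f| := ENNReal.ofReal_add_le
        _ ≤ 2 ^ d * e N + ∑ j ∈ Finset.range N, 2 ^ d * e j :=
            add_le_add
              (step (dyadicSub_idx_succ_subset hxQ) (vol_dyadicSub_succ N _ _)
                (hf.mono_set (hsubQ N))) ih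
        _ = ∑ j ∈ Finset.range (N+1), 2 ^ d * e j := by
            rw [Finset.sum_range_succ, add_comm]
  -- each oscillation is dominated by the level sum in the statement
  have hterm : ∀ j : ℕ, e j ≤
      ∑ k : Fin d → Fin (2 ^ j),
        (fun R : Cube d =>
            R.elavg (fun y => ENNReal.ofReal |f y - R.avg f|) *
              R.toSet.indicator (fun _ => (1 : ℝ≥0∞)) x)
          (Q.dyadicSub j fun i => (k i : ℕ)) := by
    intro j
    set k0 : Fin d → Fin (2 ^ j) := fun i => ⟨idx Q j x i, idx_lt hxQ i⟩ with hk0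
    have he : (fun i => ((k0 i : ℕ))) = idx Q j x := rfl
    have hxmem : x ∈ (Q.dyadicSub j (idx Q j x)).toSet := mem_dyadicSub_idx hxQ
    have heq : (fun R : Cube d =>
            R.elavg (fun y => ENNReal.ofReal |f y - R.avg f|) *
              R.toSet.indicator (fun _ => (1 : ℝ≥0∞)) x)
          (Q.dyadicSub j fun i => (k0 i : ℕ)) = e j := by
      simp only [he, hedef, hRjdef]
      rw [Set.indicator_of_mem hxmem, mul_one]
    rw [← heq]
    exact Finset.single_le_sum
      (f := fun k : Fin d → Fin (2 ^ j) =>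
        (fun R : Cube d =>
            R.elavg (fun y => ENNReal.ofReal |f y - R.avg f|) *
              R.toSet.indicator (fun _ => (1 : ℝ≥0∞)) x)
          (Q.dyadicSub j fun i => (k i : ℕ)))
      (fun k _ => zero_le) (Finset.mem_univ k0)
  -- pass to the limit
  have hcont : Filter.Tendsto (fun N => ENNReal.ofReal |(Rj N).avg f - Q.avg f|)
      Filter.atTop (nhds (ENNReal.ofReal |f x - Q.avg f|)) :=
    ENNReal.tendsto_ofReal ((hT.sub_const (Q.avg f)).abs)
  refine le_of_tendsto hcont (Filter.Eventually.of_forall fun N => ?_)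
  calc ENNReal.ofReal |(Rj N).avg f - Q.avg f| ≤ ∑ j ∈ Finset.range N, 2 ^ d * e j := hchain N
    _ = 2 ^ d * ∑ j ∈ Finset.range N, e j := by rw [Finset.mul_sum]
    _ ≤ 2 ^ d * ∑' j : ℕ, e j := mul_le_mul_right (ENNReal.sum_le_tsum _) _
    _ ≤ _ := mul_le_mul_right (ENNReal.tsum_le_tsum hterm) _
end
end

section
/- Let $Q \subseteq \mathbb{R}^d$ be a cube, $r \in [1,\infty)$, $s \in (0,1)$, and $f \in F^s_{1,r}(Q)$. Then for almost every $x \in Q$, $\Big(\int_Q \frac{|f(x)-f(y)|^r}{|x-y|^{d+sr}}dy\Big)^{1/r} \le C_d\Big[\Big(\sum_{R\in\mathcal{D}(Q)} \ell(R)^{-sr}|f(x)-\langle f\rangle_R|^r\mathbf{1}_R(x)\Big)^{1/r} + \Big(\sum_{R\in\mathcal{D}(Q)} \ell(R)^{-sr}\langle|f-\langle f\rangle_{3R}|\rangle_{r,3R}^r\,\mathbf{1}_R(x)\Big)^{1/r}\Big]$ with $C_d$ depending only on $d$. -/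
open MeasureTheory
open scoped ENNReal NNReal

noncomputable section

/-! ### Helper lemmas -/

namespace DD

variable {d : ℕ}

lemma abs_coord_le_dist (x y : Euc d) (i : Fin d) : |x i - y i| ≤ dist x y := by
  rw [EuclideanSpace.dist_eq, ← Real.sqrt_sq (abs_nonneg (x i - y i)), sq_abs]
  apply Real.sqrt_le_sqrt
  have := Finset.single_le_sum (f := fun j => dist (x j) (y j) ^ 2)
    (fun j _ => sq_nonneg _) (Finset.mem_univ i)
  simpa [Real.dist_eq, sq_abs] using this

lemma cube_toSet_eq (R : Cube d) :
    R.toSet = {x : Euc d | ∀ i, R.center i - R.side / 2 ≤ x i ∧ x i < R.center i + R.side / 2} :=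
  rfl

lemma measurableSet_toSet (R : Cube d) : MeasurableSet R.toSet := by
  have : R.toSet = ⋂ i, {x : Euc d |
      x i ∈ Set.Ico (R.center i - R.side / 2) (R.center i + R.side / 2)} := by
    ext x; simp [cube_toSet_eq, Set.mem_Ico]
  rw [this]
  exact MeasurableSet.iInter fun i =>
    (by fun_prop : Measurable fun x : Euc d => x i) measurableSet_Ico

lemma vol_pos (R : Cube d) : 0 < R.vol := pow_pos R.side_pos d

lemma volume_toSet (R : Cube d) : volume R.toSet = ENNReal.ofReal R.vol := by
  have h := (EuclideanSpace.volume_preserving_symm_measurableEquiv_toLp (Fin d)).symm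
  rw [← h.measure_preimage (measurableSet_toSet R).nullMeasurableSet]
  have : (MeasurableEquiv.toLp 2 (Fin d → ℝ)).symm.symm ⁻¹' R.toSet
      = Set.univ.pi (fun i => Set.Ico (R.center i - R.side / 2) (R.center i + R.side / 2)) := by
    ext x
    simp only [Set.mem_preimage, cube_toSet_eq, Set.mem_setOf_eq, Set.mem_pi, Set.mem_univ,
      Set.mem_Ico, forall_true_left]
    rfl
  rw [this, volume_pi_pi]
  have : ∀ i : Fin d, volume (Set.Ico (R.center i - R.side / 2) (R.center i + R.side / 2))
      = ENNReal.ofReal R.side := by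
    intro i; rw [Real.volume_Ico]; ring_nf
  simp only [this, Finset.prod_const, Finset.card_univ, Fintype.card_fin]
  rw [← ENNReal.ofReal_pow R.side_pos.le]
  rfl

lemma scale3_center (R : Cube d) : (Cube.scale 3 R).center = R.center := rfl

lemma scale3_side (R : Cube d) : (Cube.scale 3 R).side = 3 * R.side := by
  simp only [Cube.scale]
  norm_num

lemma mem_scale3 {R : Cube d} {x y : Euc d} (hx : x ∈ R.toSet)
    (h : ∀ i, |y i - x i| ≤ R.side) : y ∈ (Cube.scale 3 R).toSet := by
  intro i
  have hxi := hx i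
  have hi := h i
  have h1 := abs_le.mp hi
  constructor
  · have : (Cube.scale 3 R).center i - (Cube.scale 3 R).side / 2
        = R.center i - 3 * R.side / 2 := by
      rw [scale3_side]; rfl
    rw [this]; linarith [hxi.1]
  · have : (Cube.scale 3 R).center i + (Cube.scale 3 R).side / 2
        = R.center i + 3 * R.side / 2 := by
      rw [scale3_side]; rfl
    rw [this]; linarith [hxi.2]

lemma subset_scale3 (R : Cube d) : R.toSet ⊆ (Cube.scale 3 R).toSet := fun x hx =>
  mem_scale3 hx (fun i => by simp [abs_nonneg, R.side_pos.le])

lemma reflect_eq_self {Q : Cube d} {x : Euc d} (hx : x ∈ Q.toSet) : Q.reflect x = x := by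
  ext i
  have h := hx i
  have h0 : (0:ℝ) ≤ x i - (Q.center i - Q.side / 2) := by linarith [h.1]
  have h1 : x i - (Q.center i - Q.side / 2) < Q.side := by linarith [h.2]
  have hfl : ⌊(x i - (Q.center i - Q.side / 2)) / (2 * Q.side)⌋ = 0 := by
    rw [Int.floor_eq_zero_iff]
    constructor
    · apply div_nonneg h0; linarith [Q.side_pos]
    · rw [div_lt_one (by linarith [Q.side_pos])]
      linarith [Q.side_pos]
  show Q.center i - Q.side / 2 + Q.side - |_| = x i
  rw [hfl]
  push_cast
  rw [mul_zero, sub_zero]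
  rw [abs_of_nonpos (by linarith)]
  ring

/-- The index of the dyadic subcube of generation `j` containing `x`. -/
def kIdx (Q : Cube d) (j : ℕ) (x : Euc d) (i : Fin d) : ℕ :=
  (⌊(x i - (Q.center i - Q.side / 2)) / (Q.side / 2 ^ j)⌋).toNat

lemma kIdx_lt {Q : Cube d} {x : Euc d} (hx : x ∈ Q.toSet) (j : ℕ) (i : Fin d) :
    kIdx Q j x i < 2 ^ j := by
  have h := hx i
  have hL : (0:ℝ) < Q.side / 2 ^ j := div_pos Q.side_pos (by positivity)
  have : (x i - (Q.center i - Q.side / 2)) / (Q.side / 2 ^ j) < 2 ^ j := by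
    rw [div_lt_iff₀ hL]
    have : (2:ℝ) ^ j * (Q.side / 2 ^ j) = Q.side := by
      field_simp
    rw [this]; linarith [h.2]
  have hfl : ⌊(x i - (Q.center i - Q.side / 2)) / (Q.side / 2 ^ j)⌋ < (2:ℤ) ^ j := by
    rw [Int.floor_lt]; push_cast; exact this
  unfold kIdx
  have h2 : ((2:ℤ)^j) = ((2^j : ℕ) : ℤ) := by push_cast; ring
  have h3 : 0 < 2^j := Nat.pow_pos (n := j) (by norm_num)
  rw [h2] at hfl
  omega

lemma mem_dyadicSub_kIdx {Q : Cube d} {x : Euc d} (hx : x ∈ Q.toSet) (j : ℕ) :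
    x ∈ (Q.dyadicSub j (kIdx Q j x)).toSet := by
  intro i
  have h := hx i
  have hL : (0:ℝ) < Q.side / 2 ^ j := div_pos Q.side_pos (by positivity)
  have h0 : (0:ℝ) ≤ (x i - (Q.center i - Q.side / 2)) / (Q.side / 2 ^ j) := by
    apply div_nonneg _ hL.le; linarith [h.1]
  have hk : ((kIdx Q j x i : ℤ) : ℝ) = ⌊(x i - (Q.center i - Q.side / 2)) / (Q.side / 2 ^ j)⌋ := by
    unfold kIdx
    rw [Int.toNat_of_nonneg (Int.floor_nonneg.mpr h0)]
  have hfloor1 : ((kIdx Q j x i : ℝ)) ≤ (x i - (Q.center i - Q.side / 2)) / (Q.side / 2 ^ j) := by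
    have := Int.floor_le ((x i - (Q.center i - Q.side / 2)) / (Q.side / 2 ^ j))
    rw [← hk, Int.cast_natCast] at this; exact this
  have hfloor2 : (x i - (Q.center i - Q.side / 2)) / (Q.side / 2 ^ j) < (kIdx Q j x i : ℝ) + 1 := by
    have := Int.lt_floor_add_one ((x i - (Q.center i - Q.side / 2)) / (Q.side / 2 ^ j))
    rw [← hk, Int.cast_natCast] at this; exact this
  have e1 : (Q.dyadicSub j (kIdx Q j x)).center i = Q.center i - Q.side / 2
      + ((kIdx Q j x i : ℝ) + 1 / 2) * (Q.side / 2 ^ j) := rfl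
  have e2 : (Q.dyadicSub j (kIdx Q j x)).side = Q.side / 2 ^ j := rfl
  show (Q.dyadicSub j (kIdx Q j x)).center i - (Q.dyadicSub j (kIdx Q j x)).side / 2 ≤ x i
      ∧ x i < (Q.dyadicSub j (kIdx Q j x)).center i + (Q.dyadicSub j (kIdx Q j x)).side / 2
  rw [e1, e2]
  have hA : (kIdx Q j x i : ℝ) * (Q.side / 2 ^ j) ≤ x i - (Q.center i - Q.side / 2) :=
    (le_div_iff₀ hL).mp hfloor1
  have hB : x i - (Q.center i - Q.side / 2) < ((kIdx Q j x i : ℝ) + 1) * (Q.side / 2 ^ j) := by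
    rw [← div_lt_iff₀ hL]; exact hfloor2
  constructor
  · nlinarith [hA]
  · nlinarith [hB]

lemma dyadicSub_subset {Q : Cube d} {j : ℕ} {k : Fin d → ℕ} (hk : ∀ i, k i < 2 ^ j) :
    (Q.dyadicSub j k).toSet ⊆ Q.toSet := by
  intro y hy i
  have h := hy i
  have e1 : (Q.dyadicSub j k).center i = Q.center i - Q.side / 2
      + ((k i : ℝ) + 1 / 2) * (Q.side / 2 ^ j) := rfl
  have e2 : (Q.dyadicSub j k).side = Q.side / 2 ^ j := rfl
  rw [e1, e2] at h
  have hL : (0:ℝ) < Q.side / 2 ^ j := div_pos Q.side_pos (by positivity)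
  have hkr : (k i : ℝ) + 1 ≤ 2 ^ j := by exact_mod_cast hk i
  have h2 : ((2:ℝ) ^ j) * (Q.side / 2 ^ j) = Q.side := by field_simp
  constructor
  · have : (0:ℝ) ≤ (k i : ℝ) * (Q.side / 2 ^ j) := by positivity
    nlinarith [h.1]
  · have : ((k i : ℝ) + 1) * (Q.side / 2 ^ j) ≤ 2 ^ j * (Q.side / 2 ^ j) := by
      apply mul_le_mul_of_nonneg_right _ hL.le
      exact hkr
    nlinarith [h.2]

/-- Annuli around `x` at dyadic scales inside `Q`. -/
def ann (Q : Cube d) (x : Euc d) (j : ℕ) : Set (Euc d) :=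
  {y | y ∈ Q.toSet ∧ Q.side / 2 ^ (j + 1) < dist x y ∧ (j = 0 ∨ dist x y ≤ Q.side / 2 ^ j)}

lemma cover {Q : Cube d} {x : Euc d} (hx : x ∈ Q.toSet) :
    Q.toSet ⊆ {x} ∪ ⋃ j, ann Q x j := by
  intro y hy
  rcases eq_or_ne y x with rfl | hne
  · exact Or.inl rfl
  right
  have hd : 0 < dist x y := dist_pos.mpr (Ne.symm hne)
  rcases lt_or_ge (Q.side / 2) (dist x y) with h1 | h1
  · exact Set.mem_iUnion.mpr ⟨0, hy, by simpa using h1, Or.inl rfl⟩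
  · have hex : ∃ n : ℕ, Q.side / 2 ^ n < dist x y := by
      obtain ⟨n, hn⟩ := pow_unbounded_of_one_lt (Q.side / dist x y) (by norm_num : (1:ℝ) < 2)
      refine ⟨n, ?_⟩
      rw [div_lt_iff₀ (by positivity : (0:ℝ) < 2 ^ n)]
      rw [div_lt_iff₀ hd] at hn
      linarith
    classical
    have hspec : Q.side / 2 ^ Nat.find hex < dist x y := Nat.find_spec hex
    have hn₀ : 2 ≤ Nat.find hex := by
      rw [Nat.le_find_iff]
      intro m hm
      interval_cases m
      · push_neg
        simp only [pow_zero, div_one]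
        linarith [Q.side_pos, h1]
      · push_neg
        simpa using h1
    set j := Nat.find hex - 1 with hj
    have hjs : j + 1 = Nat.find hex := by omega
    have hmin : ¬ Q.side / 2 ^ j < dist x y := Nat.find_min hex (by omega)
    refine Set.mem_iUnion.mpr ⟨j, hy, ?_, Or.inr (not_lt.mp hmin)⟩
    rw [hjs]
    exact hspec

lemma measurableSet_ann (Q : Cube d) (x : Euc d) (j : ℕ) : MeasurableSet (ann Q x j) := by
  have : ann Q x j = Q.toSet ∩ ((fun y => dist x y) ⁻¹' Set.Ioi (Q.side / 2 ^ (j + 1)))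
      ∩ (if j = 0 then Set.univ else (fun y => dist x y) ⁻¹' Set.Iic (Q.side / 2 ^ j)) := by
    ext y
    by_cases hj : j = 0 <;>
      simp only [ann, hj, Set.mem_setOf_eq, Set.mem_inter_iff, Set.mem_preimage, Set.mem_Ioi,
        Set.mem_Iic, if_true, if_false, Set.mem_univ, and_true, eq_self_iff_true, true_or,
        false_or, ite_true, ite_false, and_assoc] <;> tauto
  rw [this]
  have hc : Measurable fun y : Euc d => dist x y := (continuous_const.dist continuous_id).measurable
  refine (((measurableSet_toSet Q).inter (hc measurableSet_Ioi)).inter ?_)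
  split
  · exact MeasurableSet.univ
  · exact hc measurableSet_Iic

lemma ann_subset_scale3 {Q : Cube d} {x : Euc d} (hx : x ∈ Q.toSet) (j : ℕ) :
    ann Q x j ⊆ (Cube.scale 3 (Q.dyadicSub j (kIdx Q j x))).toSet := by
  intro y hy
  have hxj : x ∈ (Q.dyadicSub j (kIdx Q j x)).toSet := mem_dyadicSub_kIdx hx j
  have e2 : (Q.dyadicSub j (kIdx Q j x)).side = Q.side / 2 ^ j := rfl
  apply mem_scale3 hxj
  intro i
  rw [e2]
  rcases hy.2.2 with hj0 | hle
  · subst hj0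
    simp only [pow_zero, div_one]
    have h1 := hx i
    have h2 := hy.1 i
    rw [abs_sub_le_iff]
    constructor <;> linarith [h1.1, h1.2, h2.1, h2.2]
  · calc |y i - x i| = |x i - y i| := abs_sub_comm _ _
      _ ≤ dist x y := abs_coord_le_dist x y i
      _ ≤ Q.side / 2 ^ j := hle

lemma ann_subset_Q {Q : Cube d} {x : Euc d} (j : ℕ) : ann Q x j ⊆ Q.toSet := fun _ hy => hy.1

/-- ENNReal Jensen: the `r`-th power of an average is at most the average of `r`-th powers. -/
lemma avg_rpow_le {α : Type*} [MeasurableSpace α] (μ : Measure α) (g : α → ℝ≥0∞) {r : ℝ}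
    (hr : 1 ≤ r) (hg : AEMeasurable g μ) (hμ0 : μ Set.univ ≠ 0) (hμt : μ Set.univ ≠ ⊤) :
    ((∫⁻ a, g a ∂μ) / μ Set.univ) ^ r ≤ (∫⁻ a, g a ^ r ∂μ) / μ Set.univ := by
  rcases eq_or_lt_of_le hr with rfl | hr1
  · simp
  have hq : Real.HolderConjugate r (r / (r - 1)) := Real.HolderConjugate.conjExponent hr1
  have hone : AEMeasurable (fun _ : α => (1:ℝ≥0∞)) μ := aemeasurable_const
  have hH := ENNReal.lintegral_mul_le_Lp_mul_Lq μ hq hg hone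
  simp only [Pi.mul_apply, mul_one] at hH
  have h1 : (∫⁻ a, (1:ℝ≥0∞) ^ (r / (r - 1)) ∂μ) = μ Set.univ := by
    simp
  rw [h1] at hH
  -- hH : ∫⁻ g ≤ (∫⁻ g^r)^(1/r) * (μ univ)^(1/(r/(r-1)))
  have hV : μ Set.univ ≠ 0 := hμ0
  set V := μ Set.univ
  set I := ∫⁻ a, g a ^ r ∂μ
  have hr0 : (0:ℝ) < r := by linarith
  have hcr : (1/(r/(r-1))) * r = r - 1 := by field_simp
  have h1r : (1/r) * r = 1 := by field_simp
  have hW0 : V ^ (r-1) ≠ 0 := by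
    simp only [ne_eq, ENNReal.rpow_eq_zero_iff, not_or]
    exact ⟨fun h => hV h.1, fun h => hμt h.1⟩
  have hWt : V ^ (r-1) ≠ ⊤ := by
    simp only [ne_eq, ENNReal.rpow_eq_top_iff, not_or]
    exact ⟨fun h => hV h.1, fun h => hμt h.1⟩
  calc ((∫⁻ a, g a ∂μ) / V) ^ r
      ≤ ((I ^ (1/r) * V ^ (1/(r/(r-1)))) / V) ^ r :=
        ENNReal.rpow_le_rpow (ENNReal.div_le_div_right hH V) hr0.le
    _ = (I ^ (1/r)) ^ r * (V ^ (1/(r/(r-1)))) ^ r / V ^ r := by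
        rw [ENNReal.div_rpow_of_nonneg _ _ hr0.le, ENNReal.mul_rpow_of_nonneg _ _ hr0.le]
    _ = I * V ^ (r - 1) / V ^ r := by
        rw [← ENNReal.rpow_mul, ← ENNReal.rpow_mul, hcr, h1r, ENNReal.rpow_one]
    _ = I / V := by
        have hVr : V ^ r = V * V ^ (r-1) := by
          have h := ENNReal.rpow_add 1 (r-1) hV hμt
          rw [show (1:ℝ)+(r-1) = r by ring] at h
          rw [h, ENNReal.rpow_one]
        rw [hVr]
        exact ENNReal.mul_div_mul_right I V hW0 hWt

lemma add_rpow_le (a b : ℝ≥0∞) {r : ℝ} (hr : 1 ≤ r) :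
    (a + b) ^ r ≤ 2 ^ r * a ^ r + 2 ^ r * b ^ r := by
  have hr0 : (0:ℝ) ≤ r := by linarith
  have h1 : a + b ≤ 2 * max a b := by
    rcases le_total a b with h | h
    · rw [max_eq_right h, two_mul]; exact add_le_add h le_rfl
    · rw [max_eq_left h, two_mul]; exact add_le_add le_rfl h
  calc (a + b) ^ r ≤ (2 * max a b) ^ r := ENNReal.rpow_le_rpow h1 hr0
    _ = 2 ^ r * (max a b) ^ r := ENNReal.mul_rpow_of_nonneg _ _ hr0
    _ ≤ 2 ^ r * (a ^ r + b ^ r) := by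
        apply mul_le_mul_right
        rcases le_total a b with h | h
        · rw [max_eq_right h]; exact le_add_self
        · rw [max_eq_left h]; exact self_le_add_right _ _
    _ = 2 ^ r * a ^ r + 2 ^ r * b ^ r := mul_add _ _ _

lemma ofReal_abs_rpow_bound (u v c : ℝ) {r : ℝ} (hr : 1 ≤ r) :
    ENNReal.ofReal |u - v| ^ r
      ≤ 2 ^ r * ENNReal.ofReal |u - c| ^ r + 2 ^ r * ENNReal.ofReal |v - c| ^ r := by
  have h1 : |u - v| ≤ |u - c| + |v - c| := by
    have := abs_sub_le u c v
    rwa [abs_sub_comm c v] at this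
  have h2 : ENNReal.ofReal |u - v| ≤ ENNReal.ofReal |u - c| + ENNReal.ofReal |v - c| :=
    (ENNReal.ofReal_le_ofReal h1).trans (ENNReal.ofReal_add_le)
  exact (ENNReal.rpow_le_rpow h2 (by linarith)).trans (add_rpow_le _ _ hr)

lemma scale3_vol (R : Cube d) : (Cube.scale 3 R).vol = 3 ^ d * R.vol := by
  unfold Cube.vol
  rw [scale3_side, mul_pow]

/-- Key constant comparison: `|⟨f⟩_R - m|^r ≤ 3^d ⟨|f∘refl - m|^r⟩_{3R}` in `ℝ≥0∞`. -/
lemma const_bound {Q R : Cube d} (f : Euc d → ℝ) (hf : Measurable f)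
    (hInt : IntegrableOn f Q.toSet) (hRQ : R.toSet ⊆ Q.toSet) {r : ℝ} (hr : 1 ≤ r) (m : ℝ) :
    ENNReal.ofReal |R.avg f - m| ^ r ≤
      ENNReal.ofReal (3 ^ d) *
        (Cube.scale 3 R).elavg (fun y => ENNReal.ofReal |f (Q.reflect y) - m| ^ r) := by
  set V : ℝ≥0∞ := ENNReal.ofReal R.vol with hVdef
  have hvolpos := vol_pos R
  have hV0 : V ≠ 0 := by simp [hVdef, ENNReal.ofReal_eq_zero, not_le, hvolpos]
  have hVt : V ≠ ⊤ := ENNReal.ofReal_ne_top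
  have hIntR : IntegrableOn (fun y => f y - m) R.toSet volume := by
    apply Integrable.sub (hInt.mono_set hRQ)
    exact integrableOn_const (by rw [volume_toSet]; exact ENNReal.ofReal_ne_top)
  -- Step 1: avg difference as integral
  have havg : R.avg f - m = R.vol⁻¹ * ∫ y in R.toSet, (f y - m) := by
    rw [integral_sub (hInt.mono_set hRQ)
      (integrableOn_const (by rw [volume_toSet]; exact ENNReal.ofReal_ne_top))]
    rw [setIntegral_const, measureReal_def, volume_toSet, ENNReal.toReal_ofReal (vol_pos R).le]
    unfold Cube.avg
    rw [mul_sub]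
    congr 1
    rw [smul_eq_mul, ← mul_assoc, inv_mul_cancel₀ (vol_pos R).ne', one_mul]
  have habs : |R.avg f - m| ≤ R.vol⁻¹ * ∫ y in R.toSet, |f y - m| := by
    rw [havg, abs_mul, abs_of_nonneg (inv_nonneg.mpr hvolpos.le)]
    apply mul_le_mul_of_nonneg_left _ (inv_nonneg.mpr hvolpos.le)
    have := norm_integral_le_integral_norm (μ := volume.restrict R.toSet) (fun y => f y - m)
    simpa [Real.norm_eq_abs] using this
  -- Step 2: to lintegral
  have hlint : ENNReal.ofReal (∫ y in R.toSet, |f y - m|)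
      = ∫⁻ y in R.toSet, ENNReal.ofReal |f y - m| := by
    rw [MeasureTheory.ofReal_integral_eq_lintegral_ofReal hIntR.abs
      (Filter.Eventually.of_forall fun y => abs_nonneg _)]
  have h2 : ENNReal.ofReal |R.avg f - m|
      ≤ (∫⁻ y in R.toSet, ENNReal.ofReal |f y - m|) / V := by
    calc ENNReal.ofReal |R.avg f - m|
        ≤ ENNReal.ofReal (R.vol⁻¹ * ∫ y in R.toSet, |f y - m|) := ENNReal.ofReal_le_ofReal habs
      _ = ENNReal.ofReal R.vol⁻¹ * ENNReal.ofReal (∫ y in R.toSet, |f y - m|) :=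
          ENNReal.ofReal_mul (inv_nonneg.mpr hvolpos.le)
      _ = (∫⁻ y in R.toSet, ENNReal.ofReal |f y - m|) / V := by
          rw [hlint, ENNReal.ofReal_inv_of_pos hvolpos, div_eq_mul_inv, mul_comm]
  -- Step 3: Jensen
  have hμ : (volume.restrict R.toSet) Set.univ = V := by
    rw [Measure.restrict_apply_univ, volume_toSet]
  have h3 : ENNReal.ofReal |R.avg f - m| ^ r
      ≤ (∫⁻ y in R.toSet, ENNReal.ofReal |f y - m| ^ r) / V := by
    calc ENNReal.ofReal |R.avg f - m| ^ r
        ≤ ((∫⁻ y in R.toSet, ENNReal.ofReal |f y - m|) / V) ^ r :=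
          ENNReal.rpow_le_rpow h2 (by linarith)
      _ ≤ (∫⁻ y in R.toSet, ENNReal.ofReal |f y - m| ^ r) / V := by
          have := avg_rpow_le (volume.restrict R.toSet)
            (fun y => ENNReal.ofReal |f y - m|) hr
            (((hf.sub measurable_const).abs.ennreal_ofReal).aemeasurable) (by rw [hμ]; exact hV0)
            (by rw [hμ]; exact hVt)
          rwa [hμ] at this
  -- Step 4: replace f by f ∘ reflect and enlarge domain
  have h4 : (∫⁻ y in R.toSet, ENNReal.ofReal |f y - m| ^ r)
      ≤ ∫⁻ y in (Cube.scale 3 R).toSet, ENNReal.ofReal |f (Q.reflect y) - m| ^ r := by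
    have hcongr : (∫⁻ y in R.toSet, ENNReal.ofReal |f y - m| ^ r)
        = ∫⁻ y in R.toSet, ENNReal.ofReal |f (Q.reflect y) - m| ^ r := by
      apply setLIntegral_congr_fun (measurableSet_toSet R)
      intro y hy
      dsimp only
      rw [reflect_eq_self (hRQ hy)]
    rw [hcongr]
    exact lintegral_mono' (Measure.restrict_mono (subset_scale3 R) le_rfl) le_rfl
  -- Step 5: relate to elavg over 3R
  have hV3 : ENNReal.ofReal (Cube.scale 3 R).vol = ENNReal.ofReal (3 ^ d) * V := by
    rw [scale3_vol, ENNReal.ofReal_mul (by positivity)]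
  have hc0 : ENNReal.ofReal ((3:ℝ) ^ d) ≠ 0 := by
    simp only [ne_eq, ENNReal.ofReal_eq_zero, not_le]
    positivity
  have hct : ENNReal.ofReal ((3:ℝ) ^ d) ≠ ⊤ := ENNReal.ofReal_ne_top
  have h5 : (∫⁻ y in (Cube.scale 3 R).toSet, ENNReal.ofReal |f (Q.reflect y) - m| ^ r) / V
      = ENNReal.ofReal (3 ^ d) *
        (Cube.scale 3 R).elavg (fun y => ENNReal.ofReal |f (Q.reflect y) - m| ^ r) := by
    unfold Cube.elavg
    rw [hV3]
    set A := ∫⁻ y in (Cube.scale 3 R).toSet, ENNReal.ofReal |f (Q.reflect y) - m| ^ r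
    rw [ENNReal.div_eq_inv_mul, ENNReal.div_eq_inv_mul,
      ENNReal.mul_inv (Or.inl hc0) (Or.inl hct), ← mul_assoc, ← mul_assoc,
      ENNReal.mul_inv_cancel hc0 hct, one_mul]
  calc ENNReal.ofReal |R.avg f - m| ^ r
      ≤ (∫⁻ y in R.toSet, ENNReal.ofReal |f y - m| ^ r) / V := h3
    _ ≤ (∫⁻ y in (Cube.scale 3 R).toSet, ENNReal.ofReal |f (Q.reflect y) - m| ^ r) / V :=
        ENNReal.div_le_div_right h4 V
    _ = _ := h5

lemma coeff1_le (d : ℕ) {r : ℝ} (hr : 1 ≤ r) :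
    (3:ℝ)^d * 2^d * (2:ℝ)^r * 2^r ≤ (32 * 18^d : ℝ)^r := by
  have hr0 : (0:ℝ) ≤ r := by linarith
  have h1 : (3:ℝ)^d * 2^d * (2:ℝ)^r * 2^r = 6^d * 4^r := by
    rw [← Real.rpow_natCast (6:ℝ) d]
    rw [show (6:ℝ) = 3 * 2 by norm_num, Real.mul_rpow (by norm_num) (by norm_num)]
    rw [show (4:ℝ) = 2 * 2 by norm_num, Real.mul_rpow (by norm_num) (by norm_num)]
    rw [Real.rpow_natCast, Real.rpow_natCast]
    ring
  rw [h1, Real.mul_rpow (by norm_num) (by positivity)]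
  have h2 : (4:ℝ)^r ≤ 32^r := Real.rpow_le_rpow (by norm_num) (by norm_num) hr0
  have h3 : (6:ℝ)^d ≤ (18^d : ℝ)^r := by
    calc (6:ℝ)^d ≤ 18^d := pow_le_pow_left₀ (by norm_num) (by norm_num) d
      _ = ((18:ℝ)^d)^(1:ℝ) := (Real.rpow_one _).symm
      _ ≤ ((18:ℝ)^d)^r := Real.rpow_le_rpow_of_exponent_le (one_le_pow₀ (by norm_num)) hr
  calc (6:ℝ)^d * 4^r ≤ ((18:ℝ)^d)^r * 32^r := by
        apply mul_le_mul h3 h2 (by positivity) (by positivity)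
    _ = 32^r * ((18:ℝ)^d)^r := by ring
    _ = (32:ℝ)^r * ((18:ℝ)^d)^r := rfl

lemma coeff2_le (d : ℕ) {r : ℝ} (hr : 1 ≤ r) :
    (3:ℝ)^d * 2^d * (2:ℝ)^r * (4:ℝ)^r * (1 + 3^d) ≤ (32 * 18^d : ℝ)^r := by
  have hr0 : (0:ℝ) ≤ r := by linarith
  have h1 : (3:ℝ)^d * 2^d * (2:ℝ)^r * (4:ℝ)^r * (1 + 3^d) = 6^d * (1 + 3^d) * 8^r := by
    rw [← Real.rpow_natCast (6:ℝ) d]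
    rw [show (6:ℝ) = 3 * 2 by norm_num, Real.mul_rpow (by norm_num) (by norm_num)]
    rw [show (8:ℝ) = 2 * 4 by norm_num, Real.mul_rpow (by norm_num) (by norm_num)]
    rw [Real.rpow_natCast, Real.rpow_natCast]
    ring
  rw [h1, Real.mul_rpow (by norm_num) (by positivity)]
  have h6 : (6:ℝ)^d ≤ 18^d := pow_le_pow_left₀ (by norm_num) (by norm_num) d
  have h36 : (6:ℝ)^d * 3^d = 18^d := by rw [← mul_pow]; norm_num
  have h2 : (6:ℝ)^d * (1 + 3^d) ≤ 4 * 18^d := by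
    have : (6:ℝ)^d * (1 + 3^d) = 6^d + 6^d * 3^d := by ring
    rw [this, h36]
    have : (0:ℝ) ≤ 18^d := by positivity
    linarith
  have h3 : (8:ℝ)^r * 4 ≤ 32^r := by
    have : (32:ℝ)^r = 8^r * 4^r := by
      rw [show (32:ℝ) = 8 * 4 by norm_num, Real.mul_rpow (by norm_num) (by norm_num)]
    rw [this]
    have h4 : (4:ℝ) = 4^(1:ℝ) := (Real.rpow_one _).symm
    have : (4:ℝ)^(1:ℝ) ≤ 4^r := Real.rpow_le_rpow_of_exponent_le (by norm_num) hr
    nlinarith [Real.rpow_pos_of_pos (show (0:ℝ) < 8 by norm_num) r]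
  have h5 : ((18:ℝ)^d) ≤ ((18:ℝ)^d)^r := by
    calc (18:ℝ)^d = ((18:ℝ)^d)^(1:ℝ) := (Real.rpow_one _).symm
      _ ≤ ((18:ℝ)^d)^r := Real.rpow_le_rpow_of_exponent_le (one_le_pow₀ (by norm_num)) hr
  calc (6:ℝ)^d * (1 + 3^d) * 8^r ≤ (4 * 18^d) * 8^r := by
        apply mul_le_mul_of_nonneg_right h2 (by positivity)
    _ = (8^r * 4) * 18^d := by ring
    _ ≤ 32^r * ((18:ℝ)^d)^r := by
        apply mul_le_mul h3 h5 (by positivity) (by positivity)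
    _ = (32:ℝ)^r * ((18:ℝ)^d)^r := rfl

section Annulus

variable {Q : Cube d} {x : Euc d}

lemma annulus_bound (hx : x ∈ Q.toSet) {s r : ℝ}
    (hs : 0 < s) (hs1 : s < 1) (hr : 1 ≤ r) (f : Euc d → ℝ) (hf : Measurable f)
    (hInt : IntegrableOn f Q.toSet) (j : ℕ) :
    (∫⁻ y in ann Q x j, ENNReal.ofReal |f x - f y| ^ r / edist x y ^ ((d : ℝ) + s * r))
      ≤ ENNReal.ofReal ((32 * 18 ^ d : ℝ)) ^ r *
          (ENNReal.ofReal (Q.dyadicSub j (kIdx Q j x)).side ^ (-(s * r)) *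
            ENNReal.ofReal |f x - (Q.dyadicSub j (kIdx Q j x)).avg f| ^ r)
        + ENNReal.ofReal ((32 * 18 ^ d : ℝ)) ^ r *
          (ENNReal.ofReal (Q.dyadicSub j (kIdx Q j x)).side ^ (-(s * r)) *
            (Cube.scale 3 (Q.dyadicSub j (kIdx Q j x))).elavg (fun y =>
              ENNReal.ofReal |f (Q.reflect y) -
                (Cube.scale 3 (Q.dyadicSub j (kIdx Q j x))).avg
                  (fun z => f (Q.reflect z))| ^ r)) := by
  have hr0 : (0:ℝ) < r := by linarith
  set R := Q.dyadicSub j (kIdx Q j x) with hRdef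
  have hRQ : R.toSet ⊆ Q.toSet := dyadicSub_subset (fun i => kIdx_lt hx j i)
  set L : ℝ := R.side with hLdef
  have hLval : L = Q.side / 2 ^ j := rfl
  have hLpos : 0 < L := R.side_pos
  set e : ℝ := (d : ℝ) + s * r with he
  have he0 : 0 < e := by positivity
  set c : ℝ := R.avg f with hc
  set m : ℝ := (Cube.scale 3 R).avg (fun z => f (Q.reflect z)) with hm
  set E : ℝ≥0∞ := (Cube.scale 3 R).elavg
      (fun y => ENNReal.ofReal |f (Q.reflect y) - m| ^ r) with hE
  set B : ℝ≥0∞ := ENNReal.ofReal L with hB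
  have hB0 : B ≠ 0 := by
    simp only [hB, ne_eq, ENNReal.ofReal_eq_zero, not_le]; exact hLpos
  have hBt : B ≠ ⊤ := ENNReal.ofReal_ne_top
  set V3 : ℝ≥0∞ := ENNReal.ofReal ((Cube.scale 3 R).vol) with hV3
  have hV30 : V3 ≠ 0 := by
    simp only [hV3, ne_eq, ENNReal.ofReal_eq_zero, not_le]; exact vol_pos _
  have hV3t : V3 ≠ ⊤ := ENNReal.ofReal_ne_top
  set κ : ℝ≥0∞ := (B / 2) ^ (-e) with hκ
  have hBd0 : B / 2 ≠ 0 := by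
    simp only [ne_eq, ENNReal.div_eq_zero_iff, not_or]
    exact ⟨hB0, by norm_num⟩
  have hBdt : B / 2 ≠ ⊤ := by
    intro h
    rw [ENNReal.div_eq_top] at h
    rcases h with ⟨_, h⟩ | ⟨h, _⟩
    · norm_num at h
    · exact hBt h
  have hκt : κ ≠ ⊤ := by
    rw [hκ, ne_eq, ENNReal.rpow_eq_top_iff, not_or, not_and_or, not_and_or]
    exact ⟨Or.inl hBd0, Or.inl hBdt⟩
  have h2rt : ((2:ℝ≥0∞) ^ r) ≠ ⊤ := by
    rw [ne_eq, ENNReal.rpow_eq_top_iff, not_or, not_and_or, not_and_or]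
    exact ⟨Or.inl (by norm_num), Or.inl (by norm_num)⟩
  set P1 : ℝ≥0∞ := ENNReal.ofReal |f x - c| ^ r with hP1
  set S : Set (Euc d) := (Cube.scale 3 R).toSet ∩ Q.toSet with hS
  have hSmeas : MeasurableSet S := (measurableSet_toSet _).inter (measurableSet_toSet Q)
  -- Step 1: kernel bound on the annulus
  have step1 : (∫⁻ y in ann Q x j, ENNReal.ofReal |f x - f y| ^ r / edist x y ^ e)
      ≤ κ * ∫⁻ y in ann Q x j, ENNReal.ofReal |f x - f y| ^ r := by
    rw [← lintegral_const_mul' _ _ hκt]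
    apply lintegral_mono_ae
    rw [ae_restrict_iff' (measurableSet_ann Q x j)]
    apply Filter.Eventually.of_forall
    intro y hy
    have hhalf : Q.side / 2 ^ (j + 1) = L / 2 := by
      rw [hLval, pow_succ]; ring
    have hd : L / 2 < dist x y := by rw [← hhalf]; exact hy.2.1
    have hof : ENNReal.ofReal (L / 2) = B / 2 := by
      rw [hB, ENNReal.ofReal_div_of_pos (by norm_num)]
      norm_num
    have hedist : (B / 2) ^ e ≤ edist x y ^ e := by
      apply ENNReal.rpow_le_rpow _ he0.le
      rw [edist_dist, ← hof]
      exact ENNReal.ofReal_le_ofReal hd.le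
    calc ENNReal.ofReal |f x - f y| ^ r / edist x y ^ e
        ≤ ENNReal.ofReal |f x - f y| ^ r / (B / 2) ^ e :=
          ENNReal.div_le_div_left hedist _
      _ = κ * ENNReal.ofReal |f x - f y| ^ r := by
          rw [div_eq_mul_inv, ← ENNReal.rpow_neg, ← hκ, mul_comm]
  -- Step 2: enlarge annulus to S
  have step2 : (∫⁻ y in ann Q x j, ENNReal.ofReal |f x - f y| ^ r)
      ≤ ∫⁻ y in S, ENNReal.ofReal |f x - f y| ^ r := by
    apply lintegral_mono'
    · apply Measure.restrict_mono _ le_rfl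
      intro y hy
      exact ⟨ann_subset_scale3 hx j hy, hy.1⟩
    · exact le_rfl
  -- Step 3: split via the average over R
  have step3 : (∫⁻ y in S, ENNReal.ofReal |f x - f y| ^ r)
      ≤ 2 ^ r * P1 * V3 + 2 ^ r * ∫⁻ y in S, ENNReal.ofReal |f y - c| ^ r := by
    have hb : ∀ y, ENNReal.ofReal |f x - f y| ^ r
        ≤ 2 ^ r * P1 + 2 ^ r * ENNReal.ofReal |f y - c| ^ r := fun y =>
      ofReal_abs_rpow_bound (f x) (f y) c hr
    calc (∫⁻ y in S, ENNReal.ofReal |f x - f y| ^ r)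
        ≤ ∫⁻ y in S, (2 ^ r * P1 + 2 ^ r * ENNReal.ofReal |f y - c| ^ r) :=
          lintegral_mono hb
      _ = 2 ^ r * P1 * volume S + 2 ^ r * ∫⁻ y in S, ENNReal.ofReal |f y - c| ^ r := by
          rw [lintegral_add_left measurable_const, setLIntegral_const,
            lintegral_const_mul' _ _ h2rt]
      _ ≤ 2 ^ r * P1 * V3 + 2 ^ r * ∫⁻ y in S, ENNReal.ofReal |f y - c| ^ r := by
          gcongr
          calc volume S ≤ volume (Cube.scale 3 R).toSet :=
                measure_mono Set.inter_subset_left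
            _ = V3 := by rw [volume_toSet]
  -- Step 4: pass to the reflected function on 3R
  have step4 : (∫⁻ y in S, ENNReal.ofReal |f y - c| ^ r)
      ≤ ∫⁻ y in (Cube.scale 3 R).toSet, ENNReal.ofReal |f (Q.reflect y) - c| ^ r := by
    have hcongr : (∫⁻ y in S, ENNReal.ofReal |f y - c| ^ r)
        = ∫⁻ y in S, ENNReal.ofReal |f (Q.reflect y) - c| ^ r := by
      apply setLIntegral_congr_fun hSmeas
      intro y hy
      dsimp only
      rw [reflect_eq_self hy.2]
    rw [hcongr]
    exact lintegral_mono' (Measure.restrict_mono Set.inter_subset_left le_rfl) le_rfl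
  -- Step 5: split via the average over 3R
  have step5 : (∫⁻ y in (Cube.scale 3 R).toSet, ENNReal.ofReal |f (Q.reflect y) - c| ^ r)
      ≤ 2 ^ r * (ENNReal.ofReal ((3:ℝ)^d) * E) * V3 + 2 ^ r * (E * V3) := by
    have hb : ∀ y, ENNReal.ofReal |f (Q.reflect y) - c| ^ r
        ≤ 2 ^ r * ENNReal.ofReal |c - m| ^ r
          + 2 ^ r * ENNReal.ofReal |f (Q.reflect y) - m| ^ r := by
      intro y
      have := ofReal_abs_rpow_bound (f (Q.reflect y)) c m hr
      calc ENNReal.ofReal |f (Q.reflect y) - c| ^ r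
          ≤ 2 ^ r * ENNReal.ofReal |f (Q.reflect y) - m| ^ r
            + 2 ^ r * ENNReal.ofReal |c - m| ^ r := by
            have habs : |f (Q.reflect y) - c| = |(f (Q.reflect y)) - c| := rfl
            exact this
        _ = _ := by ring
    have hconst : ENNReal.ofReal |c - m| ^ r ≤ ENNReal.ofReal ((3:ℝ)^d) * E :=
      const_bound f hf hInt hRQ hr m
    have hEint : (∫⁻ y in (Cube.scale 3 R).toSet, ENNReal.ofReal |f (Q.reflect y) - m| ^ r)
        = E * V3 := by
      rw [hE]
      unfold Cube.elavg
      rw [← hV3, ENNReal.div_mul_cancel hV30 hV3t]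
    calc (∫⁻ y in (Cube.scale 3 R).toSet, ENNReal.ofReal |f (Q.reflect y) - c| ^ r)
        ≤ ∫⁻ y in (Cube.scale 3 R).toSet, (2 ^ r * ENNReal.ofReal |c - m| ^ r
            + 2 ^ r * ENNReal.ofReal |f (Q.reflect y) - m| ^ r) := lintegral_mono hb
      _ = 2 ^ r * ENNReal.ofReal |c - m| ^ r * volume (Cube.scale 3 R).toSet
          + 2 ^ r * ∫⁻ y in (Cube.scale 3 R).toSet,
              ENNReal.ofReal |f (Q.reflect y) - m| ^ r := by
          rw [lintegral_add_left measurable_const, setLIntegral_const,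
            lintegral_const_mul' _ _ h2rt]
      _ = 2 ^ r * ENNReal.ofReal |c - m| ^ r * V3 + 2 ^ r * (E * V3) := by
          rw [volume_toSet, hEint, hV3]
      _ ≤ 2 ^ r * (ENNReal.ofReal ((3:ℝ)^d) * E) * V3 + 2 ^ r * (E * V3) := by
          gcongr
  -- Step 6: κ * V3 bound
  have h2e0 : ((2:ℝ≥0∞) ^ e) ≠ 0 := by
    simp only [ne_eq, ENNReal.rpow_eq_zero_iff, not_or, not_and_or]
    exact ⟨Or.inl (by norm_num), Or.inl (by norm_num)⟩
  have h2et : ((2:ℝ≥0∞) ^ e) ≠ ⊤ := by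
    simp only [ne_eq, ENNReal.rpow_eq_top_iff, not_or, not_and_or]
    exact ⟨Or.inl (by norm_num), Or.inl (by norm_num)⟩
  have step6 : κ * V3 ≤ ENNReal.ofReal ((3:ℝ)^d) * ENNReal.ofReal ((2:ℝ)^d) * 2 ^ r
      * B ^ (-(s * r)) := by
    have hκeq : κ = 2 ^ e * B ^ (-e) := by
      rw [hκ, ENNReal.rpow_neg, ENNReal.div_rpow_of_nonneg _ _ he0.le,
        ENNReal.inv_div (Or.inl h2et) (Or.inl h2e0), div_eq_mul_inv,
        ← ENNReal.rpow_neg]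
    have hV3eq : V3 = ENNReal.ofReal ((3:ℝ)^d) * B ^ (d:ℝ) := by
      rw [hV3, scale3_vol, ENNReal.ofReal_mul (by positivity)]
      congr 1
      rw [hB, ENNReal.rpow_natCast, ← ENNReal.ofReal_pow hLpos.le]
      rfl
    have hBcomb : B ^ (-e) * B ^ (d:ℝ) = B ^ (-(s*r)) := by
      rw [← ENNReal.rpow_add _ _ hB0 hBt]
      congr 1
      rw [he]; ring
    have h2le : (2:ℝ≥0∞) ^ e ≤ ENNReal.ofReal ((2:ℝ)^d) * 2 ^ r := by
      have : (2:ℝ≥0∞) ^ e = 2 ^ (d:ℝ) * 2 ^ (s*r) := by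
        rw [he, ENNReal.rpow_add _ _ (by norm_num) (by norm_num)]
      rw [this]
      have hd2 : (2:ℝ≥0∞) ^ (d:ℝ) = ENNReal.ofReal ((2:ℝ)^d) := by
        rw [ENNReal.rpow_natCast, ENNReal.ofReal_pow (by norm_num), ENNReal.ofReal_ofNat]
      rw [hd2]
      apply mul_le_mul_right
      exact ENNReal.rpow_le_rpow_of_exponent_le one_le_two (by nlinarith)
    calc κ * V3 = ENNReal.ofReal ((3:ℝ)^d) * ((2:ℝ≥0∞) ^ e) * (B ^ (-e) * B ^ (d:ℝ)) := by
          rw [hκeq, hV3eq]; ring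
      _ = ENNReal.ofReal ((3:ℝ)^d) * ((2:ℝ≥0∞) ^ e) * B ^ (-(s*r)) := by rw [hBcomb]
      _ ≤ ENNReal.ofReal ((3:ℝ)^d) * (ENNReal.ofReal ((2:ℝ)^d) * 2 ^ r) * B ^ (-(s*r)) := by
          gcongr
      _ = _ := by ring
  -- coefficient bounds
  set K : ℝ≥0∞ := ENNReal.ofReal ((32 * 18 ^ d : ℝ)) ^ r with hK
  have hKof : K = ENNReal.ofReal ((32 * 18 ^ d : ℝ) ^ r) :=
    ENNReal.ofReal_rpow_of_pos (by positivity)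
  have h2rof : (2:ℝ≥0∞) ^ r = ENNReal.ofReal ((2:ℝ) ^ r) := by
    rw [← ENNReal.ofReal_ofNat 2]
    exact ENNReal.ofReal_rpow_of_pos (by norm_num)
  have hcoef1 : ENNReal.ofReal ((3:ℝ)^d) * ENNReal.ofReal ((2:ℝ)^d) * 2 ^ r * 2 ^ r ≤ K := by
    rw [hKof, h2rof, ← ENNReal.ofReal_mul (by positivity), ← ENNReal.ofReal_mul (by positivity),
      ← ENNReal.ofReal_mul (by positivity)]
    exact ENNReal.ofReal_le_ofReal (coeff1_le d hr)
  have hcoef2 : ENNReal.ofReal ((3:ℝ)^d) * ENNReal.ofReal ((2:ℝ)^d) * 2 ^ r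
      * (2 ^ r * (2:ℝ≥0∞) ^ r * (ENNReal.ofReal ((3:ℝ)^d) + 1)) ≤ K := by
    have h31 : (ENNReal.ofReal ((3:ℝ)^d) + 1) = ENNReal.ofReal ((3:ℝ)^d + 1) := by
      rw [ENNReal.ofReal_add (by positivity) zero_le_one, ENNReal.ofReal_one]
    rw [hKof, h2rof, h31, ← ENNReal.ofReal_mul (by positivity),
      ← ENNReal.ofReal_mul (by positivity), ← ENNReal.ofReal_mul (by positivity),
      ← ENNReal.ofReal_mul (by positivity), ← ENNReal.ofReal_mul (by positivity)]
    apply ENNReal.ofReal_le_ofReal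
    have h4r : (2:ℝ)^r * 2^r = 4^r := by
      rw [← Real.mul_rpow (by norm_num) (by norm_num)]; norm_num
    calc (3:ℝ)^d * 2^d * 2^r * (2^r * 2^r * (3^d + 1))
        = (3:ℝ)^d * 2^d * 2^r * (4:ℝ)^r * (1 + 3^d) := by rw [← h4r]; ring
      _ ≤ (32 * 18^d : ℝ)^r := coeff2_le d hr
  -- Final assembly
  set G : Euc d → ℝ≥0∞ := fun y => ENNReal.ofReal |f x - f y| ^ r with hG
  calc (∫⁻ y in ann Q x j, ENNReal.ofReal |f x - f y| ^ r / edist x y ^ e)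
      ≤ κ * ∫⁻ y in ann Q x j, G y := step1
    _ ≤ κ * ∫⁻ y in S, G y := mul_le_mul_right step2 κ
    _ ≤ κ * (2 ^ r * P1 * V3 + 2 ^ r * ∫⁻ y in S, ENNReal.ofReal |f y - c| ^ r) :=
        mul_le_mul_right step3 κ
    _ ≤ κ * (2 ^ r * P1 * V3
          + 2 ^ r * (2 ^ r * (ENNReal.ofReal ((3:ℝ)^d) * E) * V3 + 2 ^ r * (E * V3))) :=
        mul_le_mul_right (add_le_add_right
          (mul_le_mul_right (step4.trans step5) _) _) κ
    _ = (κ * V3) * (2 ^ r * P1)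
        + (κ * V3) * (2 ^ r * (2:ℝ≥0∞) ^ r * (ENNReal.ofReal ((3:ℝ)^d) + 1) * E) := by
        ring
    _ ≤ (ENNReal.ofReal ((3:ℝ)^d) * ENNReal.ofReal ((2:ℝ)^d) * 2 ^ r * B ^ (-(s * r)))
          * (2 ^ r * P1)
        + (ENNReal.ofReal ((3:ℝ)^d) * ENNReal.ofReal ((2:ℝ)^d) * 2 ^ r * B ^ (-(s * r)))
          * (2 ^ r * (2:ℝ≥0∞) ^ r * (ENNReal.ofReal ((3:ℝ)^d) + 1) * E) :=
        add_le_add (mul_le_mul_left step6 _) (mul_le_mul_left step6 _)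
    _ = (ENNReal.ofReal ((3:ℝ)^d) * ENNReal.ofReal ((2:ℝ)^d) * 2 ^ r * 2 ^ r)
          * (B ^ (-(s * r)) * P1)
        + (ENNReal.ofReal ((3:ℝ)^d) * ENNReal.ofReal ((2:ℝ)^d) * 2 ^ r
            * (2 ^ r * (2:ℝ≥0∞) ^ r * (ENNReal.ofReal ((3:ℝ)^d) + 1)))
          * (B ^ (-(s * r)) * E) := by ring
    _ ≤ K * (B ^ (-(s * r)) * P1) + K * (B ^ (-(s * r)) * E) :=
        add_le_add (mul_le_mul_left hcoef1 _) (mul_le_mul_left hcoef2 _)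

end Annulus

end DD

open DD in
/-- Lemma 3.2: pointwise dyadic domination of the fractional
difference quotient: for `f ∈ F^s_{1,r}(Q)` and a.e. `x ∈ Q`,
`f^{s,r}_Q(x) ≤ C_d [(∑_{R∈𝒟(Q)} ℓ(R)^{-sr} |f(x)-⟨f⟩_R|^r 1_R(x))^{1/r}
  + (∑_{R∈𝒟(Q)} ℓ(R)^{-sr} ⟨|f-⟨f⟩_{3R}|⟩_{r,3R}^r 1_R(x))^{1/r}]`. -/
theorem dyadic_domination_fsr (d : ℕ) :
    ∃ C : ℝ, 0 < C ∧
      ∀ (Q : Cube d) (s r : ℝ), 0 < s → s < 1 → 1 ≤ r →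
      ∀ f : Euc d → ℝ, Measurable f → IntegrableOn f Q.toSet →
        (∫⁻ x in Q.toSet, fsr Q.toSet s r f x) ≠ ⊤ →
        ∀ᵐ x ∂(volume.restrict Q.toSet),
          fsr Q.toSet s r f x ≤
            ENNReal.ofReal C *
              ((∑' j : ℕ, ∑ k : Fin d → Fin (2 ^ j),
                  (fun R : Cube d =>
                      ENNReal.ofReal R.side ^ (-(s * r)) *
                        ENNReal.ofReal |f x - R.avg f| ^ r *
                        R.toSet.indicator (fun _ => (1 : ℝ≥0∞)) x)
                    (Q.dyadicSub j fun i => (k i : ℕ))) ^ (1 / r) +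
                (∑' j : ℕ, ∑ k : Fin d → Fin (2 ^ j),
                  (fun R : Cube d =>
                      ENNReal.ofReal R.side ^ (-(s * r)) *
                        (Cube.scale 3 R).elavg (fun y =>
                          ENNReal.ofReal
                            |f (Q.reflect y) -
                              (Cube.scale 3 R).avg (fun z => f (Q.reflect z))| ^ r) *
                        R.toSet.indicator (fun _ => (1 : ℝ≥0∞)) x)
                    (Q.dyadicSub j fun i => (k i : ℕ))) ^ (1 / r)) := by
  refine ⟨32 * 18 ^ d, by positivity, ?_⟩
  intro Q s r hs hs1 hr f hf hInt _hfin
  have hr0 : (0:ℝ) < r := by linarith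
  filter_upwards [ae_restrict_mem (measurableSet_toSet Q)] with x hx
  set K : ℝ≥0∞ := ENNReal.ofReal ((32 * 18 ^ d : ℝ)) with hK
  set g : Euc d → ℝ≥0∞ := fun y =>
    ENNReal.ofReal |f x - f y| ^ r / edist x y ^ ((d : ℝ) + s * r) with hg
  set A : ℝ≥0∞ := ∑' j : ℕ, ∑ k : Fin d → Fin (2 ^ j),
      (fun R : Cube d =>
          ENNReal.ofReal R.side ^ (-(s * r)) *
            ENNReal.ofReal |f x - R.avg f| ^ r *
            R.toSet.indicator (fun _ => (1 : ℝ≥0∞)) x)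
        (Q.dyadicSub j fun i => (k i : ℕ)) with hA
  set Bb : ℝ≥0∞ := ∑' j : ℕ, ∑ k : Fin d → Fin (2 ^ j),
      (fun R : Cube d =>
          ENNReal.ofReal R.side ^ (-(s * r)) *
            (Cube.scale 3 R).elavg (fun y =>
              ENNReal.ofReal
                |f (Q.reflect y) -
                  (Cube.scale 3 R).avg (fun z => f (Q.reflect z))| ^ r) *
            R.toSet.indicator (fun _ => (1 : ℝ≥0∞)) x)
        (Q.dyadicSub j fun i => (k i : ℕ)) with hBb
  -- selection of the dyadic cube containing x, per level
  have hind : ∀ j : ℕ, (Q.dyadicSub j (kIdx Q j x)).toSet.indicator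
      (fun _ => (1 : ℝ≥0∞)) x = 1 := fun j =>
    Set.indicator_of_mem (mem_dyadicSub_kIdx hx j) _
  have hsel1 : ∀ j : ℕ,
      ENNReal.ofReal (Q.dyadicSub j (kIdx Q j x)).side ^ (-(s * r)) *
        ENNReal.ofReal |f x - (Q.dyadicSub j (kIdx Q j x)).avg f| ^ r
      ≤ ∑ k : Fin d → Fin (2 ^ j),
          (fun R : Cube d =>
              ENNReal.ofReal R.side ^ (-(s * r)) *
                ENNReal.ofReal |f x - R.avg f| ^ r *
                R.toSet.indicator (fun _ => (1 : ℝ≥0∞)) x)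
            (Q.dyadicSub j fun i => (k i : ℕ)) := by
    intro j
    set kf : Fin d → Fin (2 ^ j) := fun i => ⟨kIdx Q j x i, kIdx_lt hx j i⟩ with hkf
    have hkeq : (fun i => ((kf i : ℕ))) = kIdx Q j x := funext fun i => rfl
    have := Finset.single_le_sum (f := fun k : Fin d → Fin (2 ^ j) =>
        (fun R : Cube d =>
            ENNReal.ofReal R.side ^ (-(s * r)) *
              ENNReal.ofReal |f x - R.avg f| ^ r *
              R.toSet.indicator (fun _ => (1 : ℝ≥0∞)) x)
          (Q.dyadicSub j fun i => (k i : ℕ)))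
      (fun k _ => zero_le) (Finset.mem_univ kf)
    calc ENNReal.ofReal (Q.dyadicSub j (kIdx Q j x)).side ^ (-(s * r)) *
          ENNReal.ofReal |f x - (Q.dyadicSub j (kIdx Q j x)).avg f| ^ r
        = (fun R : Cube d =>
              ENNReal.ofReal R.side ^ (-(s * r)) *
                ENNReal.ofReal |f x - R.avg f| ^ r *
                R.toSet.indicator (fun _ => (1 : ℝ≥0∞)) x)
            (Q.dyadicSub j fun i => ((kf i : ℕ))) := by
          simp only [hkeq]
          rw [hind j, mul_one]
      _ ≤ _ := this
  have hsel2 : ∀ j : ℕ,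
      ENNReal.ofReal (Q.dyadicSub j (kIdx Q j x)).side ^ (-(s * r)) *
        (Cube.scale 3 (Q.dyadicSub j (kIdx Q j x))).elavg (fun y =>
          ENNReal.ofReal |f (Q.reflect y) -
            (Cube.scale 3 (Q.dyadicSub j (kIdx Q j x))).avg
              (fun z => f (Q.reflect z))| ^ r)
      ≤ ∑ k : Fin d → Fin (2 ^ j),
          (fun R : Cube d =>
              ENNReal.ofReal R.side ^ (-(s * r)) *
                (Cube.scale 3 R).elavg (fun y =>
                  ENNReal.ofReal
                    |f (Q.reflect y) -
                      (Cube.scale 3 R).avg (fun z => f (Q.reflect z))| ^ r) *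
                R.toSet.indicator (fun _ => (1 : ℝ≥0∞)) x)
            (Q.dyadicSub j fun i => (k i : ℕ)) := by
    intro j
    set kf : Fin d → Fin (2 ^ j) := fun i => ⟨kIdx Q j x i, kIdx_lt hx j i⟩ with hkf
    have hkeq : (fun i => ((kf i : ℕ))) = kIdx Q j x := funext fun i => rfl
    have := Finset.single_le_sum (f := fun k : Fin d → Fin (2 ^ j) =>
        (fun R : Cube d =>
            ENNReal.ofReal R.side ^ (-(s * r)) *
              (Cube.scale 3 R).elavg (fun y =>
                ENNReal.ofReal
                  |f (Q.reflect y) -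
                    (Cube.scale 3 R).avg (fun z => f (Q.reflect z))| ^ r) *
              R.toSet.indicator (fun _ => (1 : ℝ≥0∞)) x)
          (Q.dyadicSub j fun i => (k i : ℕ)))
      (fun k _ => zero_le) (Finset.mem_univ kf)
    calc ENNReal.ofReal (Q.dyadicSub j (kIdx Q j x)).side ^ (-(s * r)) *
          (Cube.scale 3 (Q.dyadicSub j (kIdx Q j x))).elavg (fun y =>
            ENNReal.ofReal |f (Q.reflect y) -
              (Cube.scale 3 (Q.dyadicSub j (kIdx Q j x))).avg
                (fun z => f (Q.reflect z))| ^ r)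
        = (fun R : Cube d =>
              ENNReal.ofReal R.side ^ (-(s * r)) *
                (Cube.scale 3 R).elavg (fun y =>
                  ENNReal.ofReal
                    |f (Q.reflect y) -
                      (Cube.scale 3 R).avg (fun z => f (Q.reflect z))| ^ r) *
                R.toSet.indicator (fun _ => (1 : ℝ≥0∞)) x)
            (Q.dyadicSub j fun i => ((kf i : ℕ))) := by
          simp only [hkeq]
          rw [hind j, mul_one]
      _ ≤ _ := this
  -- main integral bound
  have hI : (∫⁻ y in Q.toSet, g y) ≤ K ^ r * A + K ^ r * Bb := by
    have h0 : (∫⁻ y in Q.toSet, g y)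
        ≤ (∫⁻ y in ({x} : Set (Euc d)), g y) + ∑' j : ℕ, ∫⁻ y in ann Q x j, g y := by
      calc (∫⁻ y in Q.toSet, g y)
          ≤ ∫⁻ y in ({x} ∪ ⋃ j, ann Q x j : Set (Euc d)), g y :=
            lintegral_mono' (Measure.restrict_mono (cover hx) le_rfl) le_rfl
        _ ≤ (∫⁻ y in ({x} : Set (Euc d)), g y)
            + ∫⁻ y in (⋃ j, ann Q x j : Set (Euc d)), g y := lintegral_union_le _ _ _
        _ ≤ _ := by
            gcongr
            exact lintegral_iUnion_le _ _
    have hsing : (∫⁻ y in ({x} : Set (Euc d)), g y) = 0 := by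
      rw [lintegral_singleton]
      have : g x = 0 := by
        rw [hg]
        simp only [sub_self, abs_zero, ENNReal.ofReal_zero]
        rw [ENNReal.zero_rpow_of_pos hr0, ENNReal.zero_div]
      rw [this, zero_mul]
    have hann : ∀ j : ℕ, (∫⁻ y in ann Q x j, g y)
        ≤ K ^ r * (∑ k : Fin d → Fin (2 ^ j),
            (fun R : Cube d =>
                ENNReal.ofReal R.side ^ (-(s * r)) *
                  ENNReal.ofReal |f x - R.avg f| ^ r *
                  R.toSet.indicator (fun _ => (1 : ℝ≥0∞)) x)
              (Q.dyadicSub j fun i => (k i : ℕ)))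
          + K ^ r * (∑ k : Fin d → Fin (2 ^ j),
            (fun R : Cube d =>
                ENNReal.ofReal R.side ^ (-(s * r)) *
                  (Cube.scale 3 R).elavg (fun y =>
                    ENNReal.ofReal
                      |f (Q.reflect y) -
                        (Cube.scale 3 R).avg (fun z => f (Q.reflect z))| ^ r) *
                  R.toSet.indicator (fun _ => (1 : ℝ≥0∞)) x)
              (Q.dyadicSub j fun i => (k i : ℕ))) := by
      intro j
      calc (∫⁻ y in ann Q x j, g y)
          ≤ K ^ r * (ENNReal.ofReal (Q.dyadicSub j (kIdx Q j x)).side ^ (-(s * r)) *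
                ENNReal.ofReal |f x - (Q.dyadicSub j (kIdx Q j x)).avg f| ^ r)
            + K ^ r * (ENNReal.ofReal (Q.dyadicSub j (kIdx Q j x)).side ^ (-(s * r)) *
                (Cube.scale 3 (Q.dyadicSub j (kIdx Q j x))).elavg (fun y =>
                  ENNReal.ofReal |f (Q.reflect y) -
                    (Cube.scale 3 (Q.dyadicSub j (kIdx Q j x))).avg
                      (fun z => f (Q.reflect z))| ^ r)) :=
            annulus_bound hx hs hs1 hr f hf hInt j
        _ ≤ _ := add_le_add (mul_le_mul_right (hsel1 j) _) (mul_le_mul_right (hsel2 j) _)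
    calc (∫⁻ y in Q.toSet, g y)
        ≤ (∫⁻ y in ({x} : Set (Euc d)), g y) + ∑' j : ℕ, ∫⁻ y in ann Q x j, g y := h0
      _ = ∑' j : ℕ, ∫⁻ y in ann Q x j, g y := by rw [hsing, zero_add]
      _ ≤ ∑' j : ℕ, (K ^ r * (∑ k : Fin d → Fin (2 ^ j),
            (fun R : Cube d =>
                ENNReal.ofReal R.side ^ (-(s * r)) *
                  ENNReal.ofReal |f x - R.avg f| ^ r *
                  R.toSet.indicator (fun _ => (1 : ℝ≥0∞)) x)
              (Q.dyadicSub j fun i => (k i : ℕ)))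
          + K ^ r * (∑ k : Fin d → Fin (2 ^ j),
            (fun R : Cube d =>
                ENNReal.ofReal R.side ^ (-(s * r)) *
                  (Cube.scale 3 R).elavg (fun y =>
                    ENNReal.ofReal
                      |f (Q.reflect y) -
                        (Cube.scale 3 R).avg (fun z => f (Q.reflect z))| ^ r) *
                  R.toSet.indicator (fun _ => (1 : ℝ≥0∞)) x)
              (Q.dyadicSub j fun i => (k i : ℕ)))) := ENNReal.tsum_le_tsum hann
      _ = K ^ r * A + K ^ r * Bb := by
          rw [ENNReal.tsum_add, ENNReal.tsum_mul_left, ENNReal.tsum_mul_left]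
  -- conclude
  have hfsr : fsr Q.toSet s r f x = (∫⁻ y in Q.toSet, g y) ^ (1 / r) := rfl
  rw [hfsr]
  calc (∫⁻ y in Q.toSet, g y) ^ (1 / r)
      ≤ (K ^ r * A + K ^ r * Bb) ^ (1 / r) := ENNReal.rpow_le_rpow hI (by positivity)
    _ = (K ^ r * (A + Bb)) ^ (1 / r) := by rw [mul_add]
    _ = K * (A + Bb) ^ (1 / r) := by
        rw [ENNReal.mul_rpow_of_nonneg _ _ (by positivity), ← ENNReal.rpow_mul,
          mul_one_div_cancel hr0.ne', ENNReal.rpow_one]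
    _ ≤ K * (A ^ (1 / r) + Bb ^ (1 / r)) := by
        apply mul_le_mul_right
        have h1 : ((A ^ (1/r)) ^ r + (Bb ^ (1/r)) ^ r) ^ (1 / r)
            ≤ A ^ (1/r) + Bb ^ (1/r) :=
          ENNReal.rpow_add_rpow_le_add (A ^ (1/r)) (Bb ^ (1/r)) hr
        have h2 : (A ^ (1/r)) ^ r = A := by
          rw [← ENNReal.rpow_mul, one_div_mul_cancel hr0.ne', ENNReal.rpow_one]
        have h3 : (Bb ^ (1/r)) ^ r = Bb := by
          rw [← ENNReal.rpow_mul, one_div_mul_cancel hr0.ne', ENNReal.rpow_one]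
        rwa [h2, h3] at h1
end
end
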